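/- arXiv:2210.11645 — 5 statements merged into one kernel-verified Lean document; each statement's English description precedes it below -/
import Mathlib

section
/- Let W be a finite real reflection group acting on a Euclidean space V with inner product (-,-), and let γ ∈ W be a Coxeter element (so γ fixes no nonzero vector of V). Let ϑ := (γ − 1)⁻¹ : V → V. Then for every root ρ of W (a unit-length or arbitrary nonzero vector with reflection t_ρ ∈ W), one has (ϑ(ρ), ρ) = −(1/2)(ρ, ρ). -/
open scoped RealInnerProductSpace

/-- Let `W` be a finite real reflection group acting on a Euclidean space `V`,
and let `γ ∈ W` be a Coxeter element (so `γ` fixes no nonzero vector of `V`).  Let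
`ϑ := (γ − 1)⁻¹`.  Then for every root `ρ` of `W` (a nonzero vector whose reflection
`t_ρ` lies in `W`), one has `(ϑ(ρ), ρ) = −(1/2)(ρ, ρ)`. -/
theorem milnor_theta_inner_self
    {V : Type*} [NormedAddCommGroup V] [InnerProductSpace ℝ V]
    (W : Subgroup (V ≃ₗᵢ[ℝ] V)) (hWfin : Finite W)
    (γ : V ≃ₗᵢ[ℝ] V) (hγW : γ ∈ W)
    (hγfix : ∀ v : V, γ v = v → v = 0)
    (ϑ : V →ₗ[ℝ] V) (hϑ : ∀ v : V, γ (ϑ v) - ϑ v = v)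
    (ρ : V) (hρ : ρ ≠ 0)
    (tρ : V ≃ₗᵢ[ℝ] V) (htρW : tρ ∈ W)
    (htρ : ∀ x : V, tρ x = x - (2 * ⟪ρ, x⟫ / ⟪ρ, ρ⟫) • ρ) :
    ⟪ϑ ρ, ρ⟫ = -(1 / 2) * ⟪ρ, ρ⟫ := by
  have h1 : γ (ϑ ρ) = ϑ ρ + ρ := by
    have := hϑ ρ; linear_combination (norm := abel_nf) this
  have h2 : ⟪γ (ϑ ρ), γ (ϑ ρ)⟫ = ⟪ϑ ρ, ϑ ρ⟫ := γ.inner_map_map _ _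
  rw [h1, real_inner_add_add_self] at h2
  have h3 : ⟪ϑ ρ, ρ⟫ = ⟪ρ, ϑ ρ⟫ := real_inner_comm _ _
  linarith
end

section
/- Let W be a finite real reflection group on V, γ ∈ W a Coxeter element, and ϑ := (γ − 1)⁻¹. Then for every root ρ of W, the vector ϑ(ρ) is fixed by t_ρ γ, where t_ρ is the reflection in ρ; that is, (t_ρ γ)(ϑ(ρ)) = ϑ(ρ). -/
open scoped RealInnerProductSpace

/-- Let `W` be a finite real reflection group on `V`, `γ ∈ W` a Coxeter
element, and `ϑ := (γ − 1)⁻¹`.  Then for every root `ρ` of `W`, the vector `ϑ(ρ)` is fixed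
by `t_ρ γ`, where `t_ρ` is the reflection in `ρ`; that is, `(t_ρ γ)(ϑ(ρ)) = ϑ(ρ)`. -/
theorem milnor_theta_fixed_by_reflection_mul_coxeter
    {V : Type*} [NormedAddCommGroup V] [InnerProductSpace ℝ V]
    (W : Subgroup (V ≃ₗᵢ[ℝ] V)) (hWfin : Finite W)
    (γ : V ≃ₗᵢ[ℝ] V) (hγW : γ ∈ W)
    (hγfix : ∀ v : V, γ v = v → v = 0)
    (ϑ : V →ₗ[ℝ] V) (hϑ : ∀ v : V, γ (ϑ v) - ϑ v = v)
    (ρ : V) (hρ : ρ ≠ 0)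
    (tρ : V ≃ₗᵢ[ℝ] V) (htρW : tρ ∈ W)
    (htρ : ∀ x : V, tρ x = x - (2 * ⟪ρ, x⟫ / ⟪ρ, ρ⟫) • ρ) :
    (tρ * γ) (ϑ ρ) = ϑ ρ := by
  have hγϑ : γ (ϑ ρ) = ϑ ρ + ρ := by
    have := hϑ ρ; linear_combination (norm := abel) this
  have hρρ : ⟪ρ, ρ⟫ ≠ 0 := fun h => hρ (inner_self_eq_zero.mp h)
  -- isometry: ⟪γ(ϑρ), γ(ϑρ)⟫ = ⟪ϑρ, ϑρ⟫
  have hiso : ⟪ϑ ρ + ρ, ϑ ρ + ρ⟫ = ⟪ϑ ρ, ϑ ρ⟫ := by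
    rw [← hγϑ, real_inner_self_eq_norm_sq, real_inner_self_eq_norm_sq, γ.norm_map]
  have hkey : 2 * ⟪ρ, ϑ ρ⟫ = -⟪ρ, ρ⟫ := by
    have expand : ⟪ϑ ρ + ρ, ϑ ρ + ρ⟫ =
        ⟪ϑ ρ, ϑ ρ⟫ + 2 * ⟪ρ, ϑ ρ⟫ + ⟪ρ, ρ⟫ := by
      rw [inner_add_add_self, real_inner_comm (ϑ ρ) ρ]; ring
    rw [expand] at hiso; linarith
  have hcoef : 2 * ⟪ρ, ϑ ρ + ρ⟫ / ⟪ρ, ρ⟫ = 1 := by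
    rw [inner_add_right]
    field_simp
    linarith
  show tρ (γ (ϑ ρ)) = ϑ ρ
  rw [hγϑ, htρ, hcoef, one_smul]
  abel
end

section
/- Let W be a finite real reflection group on V = ℝⁿ. For every w ∈ W, the absolute reflection length ℓ_T(w) equals the codimension of the fixed space of w, i.e., ℓ_T(w) = n − dim Fix(w), where Fix(w) = ker(w − Id). -/
open scoped RealInnerProductSpace

/-- An orthogonal reflection of a real inner product space: an isometry given by the
formula `x ↦ x − 2((ρ,x)/(ρ,ρ))ρ` for some nonzero vector `ρ`. -/
def IsEuclideanReflection {V : Type*} [NormedAddCommGroup V] [InnerProductSpace ℝ V]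
    (t : V ≃ₗᵢ[ℝ] V) : Prop :=
  ∃ ρ : V, ρ ≠ 0 ∧ ∀ x : V, t x = x - (2 * ⟪ρ, x⟫ / ⟪ρ, ρ⟫) • ρ

/-- The absolute (reflection) length of an element `w` with respect to the set of all
reflections lying in the group `W`. -/
noncomputable def absoluteLength {V : Type*} [NormedAddCommGroup V] [InnerProductSpace ℝ V]
    (W : Subgroup (V ≃ₗᵢ[ℝ] V)) (w : V ≃ₗᵢ[ℝ] V) : ℕ :=
  sInf {k : ℕ | ∃ l : List (V ≃ₗᵢ[ℝ] V),
    (∀ t ∈ l, t ∈ W ∧ IsEuclideanReflection t) ∧ l.length = k ∧ l.prod = w}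

namespace CarterAux

set_option linter.unusedSectionVars false
set_option maxHeartbeats 1000000

variable {V : Type*} [NormedAddCommGroup V] [InnerProductSpace ℝ V] [FiniteDimensional ℝ V]

/-- The reflection in the hyperplane orthogonal to `v`. -/
noncomputable def sv (v : V) : V ≃ₗᵢ[ℝ] V := Submodule.reflection ((ℝ ∙ v)ᗮ)

lemma sv_apply {v : V} (hv : v ≠ 0) (x : V) :
    sv v x = x - (2 * ⟪v, x⟫ / ⟪v, v⟫) • v := by
  have h1 : sv v x = -(Submodule.reflection (ℝ ∙ v) x) := Submodule.reflection_orthogonal_apply (K := ℝ ∙ v) x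
  rw [h1, Submodule.reflection_apply, Submodule.starProjection_singleton]
  have hvv : ⟪v, v⟫ = (‖v‖ : ℝ) ^ 2 := real_inner_self_eq_norm_sq v
  rw [hvv]
  have : (2:ℝ) * ⟪v, x⟫ / ‖v‖ ^ 2 = 2 * (⟪v, x⟫ / ‖v‖ ^ 2) := by ring
  rw [this, mul_smul, two_smul, two_smul]
  simp only [RCLike.ofReal_real_eq_id, id_eq]
  abel

lemma sv_smul {v : V} (c : ℝ) (hc : c ≠ 0) : sv (c • v) = sv v := by
  unfold sv
  congr 1
  exact congrArg (fun K : Submodule ℝ V => Kᗮ) (Submodule.span_singleton_smul_eq (Units.mk0 c hc).isUnit v)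

@[simp] lemma sv_neg (v : V) : sv (-v) = sv v := by
  have : (-v) = (-1 : ℝ) • v := by simp
  rw [this, sv_smul]; norm_num

lemma mul_apply (f g : V ≃ₗᵢ[ℝ] V) (x : V) : (f * g) x = f (g x) := rfl

lemma isReflection_sv {v : V} (hv : v ≠ 0) : IsEuclideanReflection (sv v) :=
  ⟨v, hv, sv_apply hv⟩

lemma eq_sv_of_isReflection {t : V ≃ₗᵢ[ℝ] V} (ht : IsEuclideanReflection t) :
    ∃ v : V, ‖v‖ = 1 ∧ t = sv v := by
  obtain ⟨ρ, hρ, hf⟩ := ht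
  refine ⟨‖ρ‖⁻¹ • ρ, ?_, ?_⟩
  · simp [norm_smul, norm_ne_zero_iff.2 hρ, inv_mul_cancel₀]
  · have hρn : ‖ρ‖ ≠ 0 := norm_ne_zero_iff.2 hρ
    have h1 : sv (‖ρ‖⁻¹ • ρ) = sv ρ := sv_smul _ (by positivity)
    rw [h1]
    ext x
    rw [hf x, sv_apply hρ]

lemma sv_sq {v : V} (hv : v ≠ 0) : sv v * sv v = 1 := by
  ext x
  have : sv v (sv v x) = x := Submodule.reflection_reflection _ x
  simpa [mul_apply] using this

lemma sv_inv {v : V} (hv : v ≠ 0) : (sv v)⁻¹ = sv v :=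
  inv_eq_of_mul_eq_one_left (sv_sq hv)

lemma sv_apply_self {v : V} (hv : v ≠ 0) : sv v v = -v := by
  rw [sv_apply hv]
  have h : ⟪v, v⟫ ≠ (0:ℝ) := inner_self_ne_zero.2 hv
  have h2 : (2:ℝ) * ⟪v, v⟫ / ⟪v, v⟫ = 2 := by field_simp
  rw [h2, two_smul]
  abel

lemma sv_conj (g : V ≃ₗᵢ[ℝ] V) {v : V} (hv : v ≠ 0) :
    g * sv v * g⁻¹ = sv (g v) := by
  ext x
  have hgv : g v ≠ 0 := by simp [hv]
  rw [mul_apply, mul_apply, sv_apply hv, sv_apply hgv]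
  have h1 : ⟪v, g⁻¹ x⟫ = ⟪g v, x⟫ := by
    rw [← LinearIsometryEquiv.inner_map_map g]
    congr 1
    exact g.apply_symm_apply x
  have h2 : ⟪g v, g v⟫ = ⟪v, v⟫ := LinearIsometryEquiv.inner_map_map g v v
  rw [map_sub, map_smul, h1, h2]
  congr 1
  exact g.apply_symm_apply x

noncomputable def fixS (w : V ≃ₗᵢ[ℝ] V) : Submodule ℝ V :=
  LinearMap.ker ((w : V →ₗ[ℝ] V) - LinearMap.id)

noncomputable def lm (w : V ≃ₗᵢ[ℝ] V) : V →ₗ[ℝ] V := (w : V →ₗ[ℝ] V)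

lemma lm_apply (w : V ≃ₗᵢ[ℝ] V) (x : V) : lm w x = w x := rfl

lemma fixS_eq (w : V ≃ₗᵢ[ℝ] V) : fixS w = LinearMap.ker (lm w - LinearMap.id) := rfl

lemma sub_id_apply (w : V ≃ₗᵢ[ℝ] V) (x : V) : ((lm w - LinearMap.id : V →ₗ[ℝ] V)) x = w x - x := by
  rw [LinearMap.sub_apply, lm_apply, LinearMap.id_apply]

lemma mem_fixS_iff {w : V ≃ₗᵢ[ℝ] V} {x : V} : x ∈ fixS w ↔ w x = x := by
  rw [fixS_eq, LinearMap.mem_ker, sub_id_apply, sub_eq_zero]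

lemma fixS_one : fixS (1 : V ≃ₗᵢ[ℝ] V) = ⊤ := by
  ext x
  simp only [Submodule.mem_top, iff_true, mem_fixS_iff]
  rfl

lemma eq_one_of_fixS_top {w : V ≃ₗᵢ[ℝ] V} (h : fixS w = ⊤) : w = 1 := by
  ext x
  have : x ∈ fixS w := h ▸ Submodule.mem_top
  simpa [mem_fixS_iff] using this

lemma inf_fixS_le {f g : V ≃ₗᵢ[ℝ] V} : fixS f ⊓ fixS g ≤ fixS (f * g) := by
  intro x hx
  rw [Submodule.mem_inf] at hx
  rw [mem_fixS_iff, mul_apply, mem_fixS_iff.1 hx.2, mem_fixS_iff.1 hx.1]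

lemma fixS_sv {v : V} (hv : v ≠ 0) : fixS (sv v) = (ℝ ∙ v)ᗮ := by
  ext x
  rw [mem_fixS_iff]
  exact Submodule.reflection_eq_self_iff x

lemma finrank_fixS_sv {v : V} (hv : v ≠ 0) :
    Module.finrank ℝ (fixS (sv v)) + 1 = Module.finrank ℝ V := by
  rw [fixS_sv hv]
  have h1 := Submodule.finrank_add_finrank_orthogonal (K := (ℝ ∙ v : Submodule ℝ V))
  have h2 : Module.finrank ℝ ↥(ℝ ∙ v : Submodule ℝ V) = 1 := finrank_span_singleton hv
  omega

lemma orthogonal_fixS {w : V ≃ₗᵢ[ℝ] V} :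
    (fixS w)ᗮ = LinearMap.range (lm w - LinearMap.id) := by
  have hle : LinearMap.range (lm w - LinearMap.id) ≤ (fixS w)ᗮ := by
    rintro _ ⟨x, rfl⟩
    rw [Submodule.mem_orthogonal]
    intro u hu
    rw [mem_fixS_iff] at hu
    rw [sub_id_apply, inner_sub_right]
    have : ⟪u, w x⟫ = ⟪w u, w x⟫ := by rw [hu]
    rw [this, LinearIsometryEquiv.inner_map_map]
    ring
  have hdim : Module.finrank ℝ ↥(LinearMap.range (lm w - LinearMap.id))
      = Module.finrank ℝ ↥((fixS w)ᗮ) := by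
    have h1 := LinearMap.finrank_range_add_finrank_ker (lm w - LinearMap.id)
    have h2 := Submodule.finrank_add_finrank_orthogonal (fixS w)
    have h3 : LinearMap.ker (lm w - LinearMap.id) = fixS w := rfl
    rw [h3] at h1
    omega
  exact (Submodule.eq_of_le_of_finrank_eq hle hdim).symm

/-- The key geometric lemma: multiplying by a reflection whose root is orthogonal to
the fixed space strictly enlarges the fixed space. -/
lemma fixS_lt_fixS_sv_mul {w : V ≃ₗᵢ[ℝ] V} {τ : V} (hτ : τ ≠ 0)
    (hmem : τ ∈ (fixS w)ᗮ) : fixS w < fixS (sv τ * w) := by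
  have hle : fixS w ≤ fixS (sv τ * w) := by
    intro x hx
    have hwx : w x = x := mem_fixS_iff.1 hx
    have hinner : ⟪τ, x⟫ = 0 := by
      have := (Submodule.mem_orthogonal _ _).1 hmem x hx
      rwa [real_inner_comm] at this
    rw [mem_fixS_iff, mul_apply, hwx, sv_apply hτ, hinner]
    simp
  rw [orthogonal_fixS] at hmem
  obtain ⟨y, hy⟩ := hmem
  have hy' : w y - y = τ := by
    rw [← sub_id_apply, hy]
  refine lt_of_le_of_ne hle (fun heq => ?_)
  have hyn : y ∉ fixS w := by
    rw [mem_fixS_iff]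
    intro h
    rw [h] at hy'
    simp at hy'
    exact hτ hy'.symm
  apply hyn
  rw [heq, mem_fixS_iff, mul_apply]
  -- show sv τ (w y) = y
  have hsum : ⟪τ, w y + y⟫ = 0 := by
    have : ⟪w y - y, w y + y⟫ = 0 := by
      rw [inner_sub_left, inner_add_right, inner_add_right]
      have h1 : ⟪w y, w y⟫ = ⟪y, y⟫ := by
        rw [← LinearIsometryEquiv.inner_map_map w y y]
      have h2 : ⟪w y, y⟫ = ⟪y, w y⟫ := real_inner_comm _ _
      rw [h1, h2]; ring
    rwa [hy'] at this
  have hττ : ⟪τ, τ⟫ = 2 * ⟪τ, w y⟫ := by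
    have h1 : ⟪τ, τ⟫ = ⟪τ, w y⟫ - ⟪τ, y⟫ := by
      rw [← inner_sub_right, hy']
    have h2 : ⟪τ, y⟫ = -⟪τ, w y⟫ := by
      have := hsum
      rw [inner_add_right] at this
      linarith
    rw [h1, h2]; ring
  rw [sv_apply hτ]
  have hne : ⟪τ, τ⟫ ≠ (0:ℝ) := inner_self_ne_zero.2 hτ
  have : 2 * ⟪τ, w y⟫ / ⟪τ, τ⟫ = 1 := by
    rw [← hττ, div_self hne]
  rw [this, one_smul, ← hy']
  abel

/-- Lower bound: a product of `k` reflections has fixed space of codimension at most `k`. -/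
lemma lowerBound : ∀ l : List (V ≃ₗᵢ[ℝ] V), (∀ t ∈ l, IsEuclideanReflection t) →
    Module.finrank ℝ V ≤ Module.finrank ℝ (fixS l.prod) + l.length := by
  intro l
  induction l with
  | nil =>
    intro _
    rw [List.prod_nil, List.length_nil, add_zero, fixS_one]
    rw [finrank_top]
  | cons t l ih =>
    intro hl
    have ht : IsEuclideanReflection t := hl t List.mem_cons_self
    have hrest := ih (fun s hs => hl s (List.mem_cons_of_mem t hs))
    obtain ⟨v, hv1, rfl⟩ := eq_sv_of_isReflection ht
    have hvne : v ≠ 0 := by intro h; rw [h] at hv1; simp at hv1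
    have hprod : (sv v :: l).prod = sv v * l.prod := List.prod_cons
    rw [hprod]
    have hinf : fixS (sv v) ⊓ fixS l.prod ≤ fixS (sv v * l.prod) := inf_fixS_le
    have hmono := Submodule.finrank_mono hinf
    have heq := Submodule.finrank_sup_add_finrank_inf_eq (fixS (sv v)) (fixS l.prod)
    have hsup : Module.finrank ℝ ↥((fixS (sv v)) ⊔ (fixS l.prod)) ≤ Module.finrank ℝ V :=
      Submodule.finrank_le _
    have hv2 := finrank_fixS_sv hvne
    simp only [List.length_cons]
    omega

/-! ### Nonnegative combinations -/

def NN (s : Finset V) (x : V) : Prop :=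
  ∃ c : V → ℝ, (∀ γ, 0 ≤ c γ) ∧ x = ∑ γ ∈ s, c γ • γ

lemma ite_nonneg {P : Prop} [Decidable P] {a b : ℝ} (ha : 0 ≤ a) (hb : 0 ≤ b) :
    0 ≤ if P then a else b := by
  split <;> assumption

lemma NN_mem {s : Finset V} {γ : V} (h : γ ∈ s) : NN s γ := by
  classical
  refine ⟨fun x => if x = γ then 1 else 0, fun x => ite_nonneg zero_le_one le_rfl, ?_⟩
  rw [Finset.sum_eq_single_of_mem γ h]
  · simp
  · intro b _ hb
    simp [hb]

lemma sum_split_off [DecidableEq V] {s : Finset V} {a : V} (ha : a ∈ s) (d : V → ℝ) :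
    ∑ γ ∈ s, d γ • γ = d a • a + ∑ γ ∈ s.erase a, d γ • γ :=
  (Finset.add_sum_erase s (fun γ => d γ • γ) ha).symm

lemma add_single_sum [DecidableEq V] {s : Finset V} {a : V} (ha : a ∈ s) (c : ℝ) (d : V → ℝ) :
    c • a + ∑ γ ∈ s, d γ • γ = ∑ γ ∈ s, ((if γ = a then c else 0) + d γ) • γ := by
  have h1 : ∀ γ ∈ s, ((if γ = a then c else 0) + d γ) • γ
      = (if γ = a then c • γ else 0) + d γ • γ := by
    intro γ _
    rw [add_smul]
    congr 1
    split <;> simp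
  rw [Finset.sum_congr rfl h1, Finset.sum_add_distrib,
    Finset.sum_ite_eq' s a (fun γ => c • γ), if_pos ha]

/-- Substitution: if `β`'s representation over `s.erase β` exists, any `NN s` element is
`NN (s.erase β)`. -/
lemma NN_erase_subst [DecidableEq V] {s : Finset V} {β x : V} (hβ : β ∈ s)
    (hrep : NN (s.erase β) β) (hx : NN s x) : NN (s.erase β) x := by
  obtain ⟨d, hd0, hdrep⟩ := hrep
  obtain ⟨c, hc0, hcrep⟩ := hx
  refine ⟨fun γ => c β * d γ + c γ, fun γ => add_nonneg (mul_nonneg (hc0 β) (hd0 γ)) (hc0 γ), ?_⟩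
  calc x = c β • β + ∑ γ ∈ s.erase β, c γ • γ := by rw [hcrep, sum_split_off hβ c]
    _ = c β • (∑ γ ∈ s.erase β, d γ • γ) + ∑ γ ∈ s.erase β, c γ • γ := by rw [← hdrep]
    _ = ∑ γ ∈ s.erase β, ((c β * d γ) • γ) + ∑ γ ∈ s.erase β, c γ • γ := by
        rw [Finset.smul_sum]
        congr 1
        exact Finset.sum_congr rfl (fun γ _ => (smul_smul _ _ _))
    _ = ∑ γ ∈ s.erase β, (c β * d γ + c γ) • γ := by
        rw [← Finset.sum_add_distrib]
        exact Finset.sum_congr rfl (fun γ _ => (add_smul _ _ _).symm)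

/-! ### Root data -/

structure RootData (Φ : Finset V) (p : V) : Prop where
  unit : ∀ α ∈ Φ, ‖α‖ = 1
  sneg : ∀ α ∈ Φ, -α ∈ Φ
  pne : ∀ α ∈ Φ, ⟪α, p⟫ ≠ 0
  stab : ∀ α ∈ Φ, ∀ β ∈ Φ, sv α β ∈ Φ

lemma RootData.nz {Φ : Finset V} {p : V} (hR : RootData Φ p) {α : V} (hα : α ∈ Φ) : α ≠ 0 := by
  intro h
  have := hR.unit α hα
  rw [h] at this
  simp at this

lemma RootData.self_inner {Φ : Finset V} {p : V} (hR : RootData Φ p) {α : V} (hα : α ∈ Φ) :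
    ⟪α, α⟫ = 1 := by
  rw [real_inner_self_eq_norm_sq, hR.unit α hα]
  norm_num

lemma RootData.sv_apply' {Φ : Finset V} {p : V} (hR : RootData Φ p) {α : V} (hα : α ∈ Φ)
    (x : V) : sv α x = x - (2 * ⟪α, x⟫) • α := by
  rw [sv_apply (hR.nz hα), hR.self_inner hα, div_one]

structure SimpData (Φ : Finset V) (p : V) (Δ : Finset V) : Prop where
  sub : Δ ⊆ Φ
  pos : ∀ δ ∈ Δ, 0 < ⟪δ, p⟫
  spans : ∀ β ∈ Φ, 0 < ⟪β, p⟫ → NN Δ β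
  obtuse : ∀ α ∈ Δ, ∀ β ∈ Δ, α ≠ β → ⟪α, β⟫ ≤ 0

lemma exists_simpData {Φ : Finset V} {p : V} (hR : RootData Φ p) :
    ∃ Δ : Finset V, SimpData Φ p Δ := by
  classical
  set C := Φ.powerset.filter
    (fun s => (∀ δ ∈ s, 0 < ⟪δ, p⟫) ∧ ∀ β ∈ Φ, 0 < ⟪β, p⟫ → NN s β) with hC
  have hCne : C.Nonempty := by
    refine ⟨Φ.filter (fun α => 0 < ⟪α, p⟫), ?_⟩
    rw [hC, Finset.mem_filter]
    refine ⟨Finset.mem_powerset.2 (Finset.filter_subset _ _), ?_, ?_⟩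
    · intro δ hδ; exact (Finset.mem_filter.1 hδ).2
    · intro β hβ hpos; exact NN_mem (Finset.mem_filter.2 ⟨hβ, hpos⟩)
  obtain ⟨Δ, hΔC, hmin⟩ := Finset.exists_min_image C Finset.card hCne
  rw [hC, Finset.mem_filter, Finset.mem_powerset] at hΔC
  obtain ⟨hsub, hpos, hspans⟩ := hΔC
  refine ⟨Δ, hsub, hpos, hspans, ?_⟩
  -- obtuseness
  intro α hα β hβ hne
  by_contra hcon
  push_neg at hcon
  have hαΦ : α ∈ Φ := hsub hα
  have hβΦ : β ∈ Φ := hsub hβ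
  set c : ℝ := 2 * ⟪α, β⟫ with hcdef
  have hcpos : 0 < c := by positivity
  have hσΦ : sv α β ∈ Φ := hR.stab α hαΦ β hβΦ
  have hσformula : sv α β = β - c • α := hR.sv_apply' hαΦ β
  -- auxiliary: minimality gives that erasing is impossible
  have nocut : ∀ θ ∈ Δ, ¬ NN (Δ.erase θ) θ := by
    intro θ hθ hrep
    have hmem : Δ.erase θ ∈ C := by
      rw [hC, Finset.mem_filter, Finset.mem_powerset]
      refine ⟨(Finset.erase_subset _ _).trans hsub, ?_, ?_⟩
      · intro δ hδ; exact hpos δ (Finset.mem_of_mem_erase hδ)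
      · intro θ' hθ' hp'
        exact NN_erase_subst hθ hrep (hspans θ' hθ' hp')
    have := hmin _ hmem
    have hlt : (Δ.erase θ).card < Δ.card := Finset.card_erase_lt_of_mem hθ
    omega
  by_cases hσpos : 0 < ⟪sv α β, p⟫
  · -- positive case
    obtain ⟨d, hd0, hdrep⟩ := hspans _ hσΦ hσpos
    have h2 : sv α β = d β • β + ∑ γ ∈ Δ.erase β, d γ • γ := by
      rw [hdrep, sum_split_off hβ d]
    have h3 : β - c • α = d β • β + ∑ γ ∈ Δ.erase β, d γ • γ := by
      rw [← h2, hσformula]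
    have hkey : (1 - d β) • β = c • α + ∑ γ ∈ Δ.erase β, d γ • γ := by
      calc (1 - d β) • β = (β - c • α) - d β • β + c • α := by
            rw [sub_smul, one_smul]; abel
        _ = c • α + ∑ γ ∈ Δ.erase β, d γ • γ := by rw [h3]; abel
    by_cases hdβ : d β < 1
    · refine nocut β hβ ?_
      have hαe : α ∈ Δ.erase β := Finset.mem_erase.2 ⟨hne, hα⟩
      refine ⟨fun γ => (1 - d β)⁻¹ * ((if γ = α then c else 0) + d γ), ?_, ?_⟩
      · intro γ
        have h1 : (0:ℝ) ≤ (1 - d β)⁻¹ := by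
          apply inv_nonneg.2; linarith
        exact mul_nonneg h1 (add_nonneg (ite_nonneg (le_of_lt hcpos) le_rfl) (hd0 γ))
      · have hne1 : (1 : ℝ) - d β ≠ 0 := by intro h; rw [sub_eq_zero] at h; linarith
        rw [add_single_sum hαe c d] at hkey
        calc β = (1 - d β)⁻¹ • ((1 - d β) • β) := by
              rw [smul_smul, inv_mul_cancel₀ hne1, one_smul]
          _ = ∑ γ ∈ Δ.erase β, ((1 - d β)⁻¹ * ((if γ = α then c else 0) + d γ)) • γ := by
              rw [hkey, Finset.smul_sum]
              exact Finset.sum_congr rfl (fun γ _ => (smul_smul _ _ _))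
    · -- d β ≥ 1 : inner with p gives contradiction
      push_neg at hdβ
      have happ : (1 - d β) * ⟪β, p⟫
          = c * ⟪α, p⟫ + ∑ γ ∈ Δ.erase β, d γ * ⟪γ, p⟫ := by
        have h5 := congrArg (fun x : V => ⟪x, p⟫) hkey
        simpa only [inner_add_left, real_inner_smul_left, sum_inner] using h5
      have hL : (1 - d β) * ⟪β, p⟫ ≤ 0 := by
        have h1 : (0:ℝ) < ⟪β, p⟫ := hpos β hβ
        have h2' : (1:ℝ) - d β ≤ 0 := by linarith
        exact mul_nonpos_of_nonpos_of_nonneg h2' (le_of_lt h1)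
      have hR1 : 0 < c * ⟪α, p⟫ + ∑ γ ∈ Δ.erase β, d γ * ⟪γ, p⟫ := by
        have h1 : 0 < c * ⟪α, p⟫ := mul_pos hcpos (hpos α hα)
        have h2' : 0 ≤ ∑ γ ∈ Δ.erase β, d γ * ⟪γ, p⟫ := by
          refine Finset.sum_nonneg (fun γ hγ => ?_)
          exact mul_nonneg (hd0 γ) (le_of_lt (hpos γ (Finset.mem_of_mem_erase hγ)))
        linarith
      rw [happ] at hL
      linarith
  · -- negative case : -σ is positive
    have hσne : ⟪sv α β, p⟫ ≠ 0 := hR.pne _ hσΦ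
    have hσneg : ⟪sv α β, p⟫ < 0 := lt_of_le_of_ne (not_lt.1 hσpos) hσne
    have hmσΦ : -(sv α β) ∈ Φ := hR.sneg _ hσΦ
    have hmσpos : 0 < ⟪-(sv α β), p⟫ := by
      rw [inner_neg_left]; linarith
    obtain ⟨d, hd0, hdrep⟩ := hspans _ hmσΦ hmσpos
    have h2 : -(sv α β) = d α • α + ∑ γ ∈ Δ.erase α, d γ • γ := by
      rw [hdrep, sum_split_off hα d]
    have h3 : c • α - β = d α • α + ∑ γ ∈ Δ.erase α, d γ • γ := by
      rw [← h2, hσformula]; abel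
    have hkey : (c - d α) • α = β + ∑ γ ∈ Δ.erase α, d γ • γ := by
      calc (c - d α) • α = (c • α - β) - d α • α + β := by
            rw [sub_smul]; abel
        _ = β + ∑ γ ∈ Δ.erase α, d γ • γ := by rw [h3]; abel
    by_cases hdα : d α < c
    · refine nocut α hα ?_
      have hβe : β ∈ Δ.erase α := Finset.mem_erase.2 ⟨hne.symm, hβ⟩
      refine ⟨fun γ => (c - d α)⁻¹ * ((if γ = β then 1 else 0) + d γ), ?_, ?_⟩
      · intro γ
        have h1 : (0:ℝ) ≤ (c - d α)⁻¹ := by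
          apply inv_nonneg.2; linarith
        exact mul_nonneg h1 (add_nonneg (ite_nonneg zero_le_one le_rfl) (hd0 γ))
      · have hne1 : c - d α ≠ 0 := by intro h; rw [sub_eq_zero] at h; linarith
        rw [show β + ∑ γ ∈ Δ.erase α, d γ • γ
            = (1:ℝ) • β + ∑ γ ∈ Δ.erase α, d γ • γ by rw [one_smul],
          add_single_sum hβe 1 d] at hkey
        calc α = (c - d α)⁻¹ • ((c - d α) • α) := by
              rw [smul_smul, inv_mul_cancel₀ hne1, one_smul]
          _ = ∑ γ ∈ Δ.erase α, ((c - d α)⁻¹ * ((if γ = β then 1 else 0) + d γ)) • γ := by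
              rw [hkey, Finset.smul_sum]
              exact Finset.sum_congr rfl (fun γ _ => (smul_smul _ _ _))
    · push_neg at hdα
      have happ : (c - d α) * ⟪α, p⟫
          = ⟪β, p⟫ + ∑ γ ∈ Δ.erase α, d γ * ⟪γ, p⟫ := by
        have h5 := congrArg (fun x : V => ⟪x, p⟫) hkey
        simpa only [inner_add_left, real_inner_smul_left, sum_inner] using h5
      have hL : (c - d α) * ⟪α, p⟫ ≤ 0 := by
        have h1 : (0:ℝ) < ⟪α, p⟫ := hpos α hα
        have h2' : c - d α ≤ 0 := by linarith
        exact mul_nonpos_of_nonpos_of_nonneg h2' (le_of_lt h1)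
      have hR1 : 0 < ⟪β, p⟫ + ∑ γ ∈ Δ.erase α, d γ * ⟪γ, p⟫ := by
        have h1 : (0:ℝ) < ⟪β, p⟫ := hpos β hβ
        have h2' : 0 ≤ ∑ γ ∈ Δ.erase α, d γ * ⟪γ, p⟫ := by
          refine Finset.sum_nonneg (fun γ hγ => ?_)
          exact mul_nonneg (hd0 γ) (le_of_lt (hpos γ (Finset.mem_of_mem_erase hγ)))
        linarith
      rw [happ] at hL
      linarith

/-- Linear independence of the simple system: a vanishing combination has all
coefficients zero. -/
lemma simp_coeff_zero {Φ Δ : Finset V} {p : V} (hS : SimpData Φ p Δ)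
    (l : V → ℝ) (h : ∑ γ ∈ Δ, l γ • γ = 0) : ∀ γ ∈ Δ, l γ = 0 := by
  classical
  set P := Δ.filter (fun γ => 0 < l γ) with hP
  set N := Δ.filter (fun γ => ¬ 0 < l γ) with hN
  set u := ∑ γ ∈ P, l γ • γ with hu
  have hsplit : ∑ γ ∈ P, l γ • γ + ∑ γ ∈ N, l γ • γ = 0 := by
    rw [hP, hN, Finset.sum_filter_add_sum_filter_not Δ _ (fun γ => l γ • γ)]
    exact h
  have hu2 : u = ∑ γ ∈ N, (- l γ) • γ := by
    have h1 : u = - ∑ γ ∈ N, l γ • γ := eq_neg_of_add_eq_zero_left hsplit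
    rw [h1, ← Finset.sum_neg_distrib]
    exact Finset.sum_congr rfl (fun γ _ => (neg_smul _ _).symm)
  have hinner : ⟪u, u⟫ ≤ 0 := by
    have hexp : ⟪u, u⟫ = ∑ γ ∈ P, ∑ γ' ∈ N, l γ * ((- l γ') * ⟪γ, γ'⟫) := by
      nth_rewrite 2 [hu2]
      rw [hu, sum_inner]
      refine Finset.sum_congr rfl (fun γ _ => ?_)
      rw [real_inner_smul_left, inner_sum, Finset.mul_sum]
      exact Finset.sum_congr rfl (fun γ' _ => by rw [real_inner_smul_right])
    rw [hexp]
    refine Finset.sum_nonpos (fun γ hγ => Finset.sum_nonpos (fun γ' hγ' => ?_))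
    rw [hP, Finset.mem_filter] at hγ
    rw [hN, Finset.mem_filter] at hγ'
    have hne : γ ≠ γ' := by
      intro hh
      rw [hh] at hγ
      exact hγ'.2 hγ.2
    have hob : ⟪γ, γ'⟫ ≤ 0 := hS.obtuse γ hγ.1 γ' hγ'.1 hne
    have h1 : 0 ≤ - l γ' := by
      have := hγ'.2; push_neg at this; linarith
    exact mul_nonpos_of_nonneg_of_nonpos (le_of_lt hγ.2)
      (mul_nonpos_of_nonneg_of_nonpos h1 hob)
  have hu0 : u = 0 := real_inner_self_nonpos.1 hinner
  have hnonpos : ∀ γ ∈ Δ, l γ ≤ 0 := by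
    intro γ hγΔ
    by_contra hc
    push_neg at hc
    have hγP : γ ∈ P := by rw [hP, Finset.mem_filter]; exact ⟨hγΔ, hc⟩
    have hfp : ∑ γ' ∈ P, l γ' * ⟪γ', p⟫ = 0 := by
      have h5 := congrArg (fun x : V => ⟪x, p⟫) hu0
      simpa only [hu, sum_inner, real_inner_smul_left, inner_zero_left] using h5
    have hterms : ∀ γ' ∈ P, 0 ≤ l γ' * ⟪γ', p⟫ := by
      intro γ' hγ'
      rw [hP, Finset.mem_filter] at hγ'
      exact mul_nonneg (le_of_lt hγ'.2) (le_of_lt (hS.pos γ' hγ'.1))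
    have := (Finset.sum_eq_zero_iff_of_nonneg hterms).1 hfp γ hγP
    have hppos := hS.pos γ hγΔ
    rw [hP, Finset.mem_filter] at hγP
    nlinarith
  -- now all coefficients nonpositive; pair the whole sum with p
  have hfp2 : ∑ γ ∈ Δ, l γ * ⟪γ, p⟫ = 0 := by
    have h5 := congrArg (fun x : V => ⟪x, p⟫) h
    simpa only [sum_inner, real_inner_smul_left, inner_zero_left] using h5
  have hterms2 : ∀ γ ∈ Δ, l γ * ⟪γ, p⟫ ≤ 0 := by
    intro γ hγ
    exact mul_nonpos_of_nonpos_of_nonneg (hnonpos γ hγ) (le_of_lt (hS.pos γ hγ))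
  intro γ hγ
  have := (Finset.sum_eq_zero_iff_of_nonpos hterms2).1 hfp2 γ hγ
  have hppos := hS.pos γ hγ
  exact by nlinarith

/-- Humphreys' Lemma 1.4: a simple reflection permutes the positive roots other than
its own root. -/
lemma simple_perm_pos {Φ Δ : Finset V} {p : V} (hR : RootData Φ p) (hS : SimpData Φ p Δ)
    {δ β : V} (hδ : δ ∈ Δ) (hβ : β ∈ Φ) (hβpos : 0 < ⟪β, p⟫) (hne : β ≠ δ) :
    sv δ β ∈ Φ ∧ 0 < ⟪sv δ β, p⟫ := by
  classical
  have hδΦ : δ ∈ Φ := hS.sub hδ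
  have hσΦ : sv δ β ∈ Φ := hR.stab δ hδΦ β hβ
  refine ⟨hσΦ, ?_⟩
  by_contra hσpos
  have hσneg : ⟪sv δ β, p⟫ < 0 := lt_of_le_of_ne (not_lt.1 hσpos) (hR.pne _ hσΦ)
  set η := -(sv δ β) with hη
  have hηΦ : η ∈ Φ := hR.sneg _ hσΦ
  have hηpos : 0 < ⟪η, p⟫ := by rw [hη, inner_neg_left]; linarith
  set c : ℝ := 2 * ⟪δ, β⟫ with hc
  have hβη : β + η = c • δ := by
    rw [hη, hR.sv_apply' hδΦ β, hc]; abel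
  have hcpos : 0 < c := by
    have h5 := congrArg (fun x : V => ⟪x, p⟫) hβη
    simp only [inner_add_left, real_inner_smul_left] at h5
    have hδp := hS.pos δ hδ
    nlinarith
  obtain ⟨b, hb0, hbrep⟩ := hS.spans β hβ hβpos
  obtain ⟨e, he0, herep⟩ := hS.spans η hηΦ hηpos
  -- the combination (b + e - c·1_δ) vanishes
  have hzero : ∑ γ ∈ Δ, (b γ + e γ - (if γ = δ then c else 0)) • γ = 0 := by
    have h1 : ∀ γ ∈ Δ, (b γ + e γ - (if γ = δ then c else 0)) • γ
        = b γ • γ + e γ • γ - (if γ = δ then c • γ else 0) := by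
      intro γ _
      rw [sub_smul, add_smul]
      congr 1
      split <;> simp
    rw [Finset.sum_congr rfl h1, Finset.sum_sub_distrib, Finset.sum_add_distrib,
      Finset.sum_ite_eq' Δ δ (fun γ => c • γ), if_pos hδ, ← hbrep, ← herep, hβη]
    abel
  have hcoeff := simp_coeff_zero hS _ hzero
  -- all coefficients except δ vanish, so β = b δ • δ
  have hβδ : β = b δ • δ := by
    rw [hbrep, Finset.sum_eq_single_of_mem δ hδ]
    intro γ hγ hγδ
    have h2 := hcoeff γ hγ
    rw [if_neg hγδ] at h2
    have hb := hb0 γ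
    have he := he0 γ
    have : b γ = 0 := by linarith
    rw [this, zero_smul]
  -- hence β = δ, contradiction
  have hbδ1 : b δ = 1 := by
    have hn : ‖β‖ = 1 := hR.unit β hβ
    have hnδ : ‖δ‖ = 1 := hR.unit δ hδΦ
    have h3 : |b δ| = 1 := by
      rw [hβδ, norm_smul, hnδ, mul_one] at hn
      simpa using hn
    have hsign : 0 < b δ := by
      have h4 : ⟪β, p⟫ = b δ * ⟪δ, p⟫ := by rw [hβδ, real_inner_smul_left]
      have hδp := hS.pos δ hδ
      nlinarith
    cases abs_cases (b δ) with
    | inl h => linarith [h.1]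
    | inr h => linarith [h.1]
  exact hne (by rw [hβδ, hbδ1, one_smul])

/-- Elements of the group generated by root reflections stabilize the root set. -/
lemma closure_stab {Φ : Finset V} {p : V} (hR : RootData Φ p) {w : V ≃ₗᵢ[ℝ] V}
    (hw : w ∈ Subgroup.closure {t : V ≃ₗᵢ[ℝ] V | ∃ α ∈ Φ, t = sv α}) :
    ∀ β ∈ Φ, w β ∈ Φ := by
  classical
  induction hw using Subgroup.closure_induction with
  | mem t ht =>
    obtain ⟨α, hα, rfl⟩ := ht
    intro β hβ
    exact hR.stab α hα β hβ
  | one => intro β hβ; exact hβ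
  | mul x y hx hy ihx ihy =>
    intro β hβ
    rw [mul_apply]
    exact ihx _ (ihy β hβ)
  | inv x hx ihx =>
    intro β hβ
    -- x maps Φ into Φ injectively, hence surjectively
    have hsurj := Finset.surj_on_of_inj_on_of_card_le (s := Φ) (t := Φ)
      (fun a _ => x a) (fun a ha => ihx a ha)
      (fun a₁ a₂ _ _ h => x.injective h) le_rfl
    obtain ⟨a, ha, hax⟩ := hsurj β hβ
    have : x⁻¹ (x a) = a := by
      have h1 : (x⁻¹ * x) a = a := by rw [inv_mul_cancel]; rfl
      rwa [mul_apply] at h1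
    rw [hax, this]
    exact ha

/-- Extract a word of roots from membership in the closure of a set of reflections. -/
lemma exists_word {D : Set V} (hD : ∀ v ∈ D, v ≠ 0) {w : V ≃ₗᵢ[ℝ] V}
    (hw : w ∈ Subgroup.closure {t : V ≃ₗᵢ[ℝ] V | ∃ δ ∈ D, t = sv δ}) :
    ∃ ds : List V, (∀ δ ∈ ds, δ ∈ D) ∧ (ds.map sv).prod = w := by
  have h1 : w ∈ Submonoid.closure ({t : V ≃ₗᵢ[ℝ] V | ∃ δ ∈ D, t = sv δ}
      ∪ {t : V ≃ₗᵢ[ℝ] V | ∃ δ ∈ D, t = sv δ}⁻¹) := by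
    rw [← Subgroup.closure_toSubmonoid]
    exact hw
  obtain ⟨l, hl, hprod⟩ := Submonoid.exists_list_of_mem_closure h1
  -- every element of l is a reflection at a root of D
  have hl' : ∀ y ∈ l, ∃ δ ∈ D, y = sv δ := by
    intro y hy
    rcases hl y hy with h | h
    · exact h
    · obtain ⟨δ, hδ, hyδ⟩ := h
      refine ⟨δ, hδ, ?_⟩
      have : y⁻¹ = sv δ := hyδ
      rw [← inv_inv y, this, sv_inv (hD δ hδ)]
  have hgen : ∀ l' : List (V ≃ₗᵢ[ℝ] V), (∀ y ∈ l', ∃ δ ∈ D, y = sv δ) →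
      ∃ ds : List V, (∀ δ ∈ ds, δ ∈ D) ∧ List.map sv ds = l' := by
    intro l'
    induction l' with
    | nil => exact fun _ => ⟨[], by simp, by simp⟩
    | cons t l'' ih =>
      intro hl''
      obtain ⟨ds, hds, hmap⟩ := ih (fun y hy => hl'' y (List.mem_cons_of_mem t hy))
      obtain ⟨δ, hδ, rfl⟩ := hl'' t List.mem_cons_self
      refine ⟨δ :: ds, ?_, by rw [List.map_cons, hmap]⟩
      intro x hx
      rcases List.mem_cons.1 hx with h | h
      · rw [h]; exact hδ
      · exact hds x h
  obtain ⟨ds, hds, hmap⟩ := hgen l hl'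
  exact ⟨ds, hds, by rw [hmap, hprod]⟩

/-- Humphreys 1.5: every reflection of the root system lies in the subgroup generated by
the simple reflections. -/
lemma generation {Φ Δ : Finset V} {p : V} (hR : RootData Φ p) (hS : SimpData Φ p Δ)
    {α : V} (hα : α ∈ Φ) :
    sv α ∈ Subgroup.closure {t : V ≃ₗᵢ[ℝ] V | ∃ δ ∈ Δ, t = sv δ} := by
  classical
  set W' := Subgroup.closure {t : V ≃ₗᵢ[ℝ] V | ∃ δ ∈ Δ, t = sv δ} with hW'
  -- reduce to positive roots
  suffices h : ∀ β ∈ Φ, 0 < ⟪β, p⟫ → sv β ∈ W' by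
    by_cases hpos : 0 < ⟪α, p⟫
    · exact h α hα hpos
    · have hneg : 0 < ⟪-α, p⟫ := by
        rw [inner_neg_left]
        have := hR.pne α hα
        rcases lt_or_gt_of_ne this with h1 | h1
        · linarith
        · exact absurd h1 hpos
      have := h (-α) (hR.sneg α hα) hneg
      rwa [sv_neg] at this
  intro β hβ hβpos
  -- consider the orbit of β under W' intersected with the positive roots
  set A := Φ.filter (fun β' => 0 < ⟪β', p⟫ ∧ ∃ u ∈ W', u β = β') with hA
  have hβA : β ∈ A := by
    rw [hA, Finset.mem_filter]
    exact ⟨hβ, hβpos, 1, Subgroup.one_mem _, rfl⟩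
  obtain ⟨β₀, hβ₀A, hminf⟩ := Finset.exists_min_image A (fun β' => ⟪β', p⟫) ⟨β, hβA⟩
  rw [hA, Finset.mem_filter] at hβ₀A
  obtain ⟨hβ₀Φ, hβ₀pos, u, huW, huβ⟩ := hβ₀A
  -- there is a simple root with positive coefficient and positive inner product
  obtain ⟨b, hb0, hbrep⟩ := hS.spans β₀ hβ₀Φ hβ₀pos
  have hexists : ∃ δ ∈ Δ, 0 < b δ ∧ 0 < ⟪β₀, δ⟫ := by
    by_contra hno
    push_neg at hno
    have h1 : ⟪β₀, β₀⟫ ≤ 0 := by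
      nth_rewrite 2 [hbrep]
      rw [inner_sum]
      refine Finset.sum_nonpos (fun γ hγ => ?_)
      rw [real_inner_smul_right]
      rcases eq_or_lt_of_le (hb0 γ) with h2 | h2
      · rw [← h2, zero_mul]
      · exact mul_nonpos_of_nonneg_of_nonpos (le_of_lt h2) (hno γ hγ h2)
    have h3 : ⟪β₀, β₀⟫ = 1 := hR.self_inner hβ₀Φ
    linarith
  obtain ⟨δ, hδ, hbδ, hip⟩ := hexists
  by_cases hcase : β₀ = δ
  · -- β₀ is simple: conclude
    have hsvδ : sv δ ∈ W' := by
      apply Subgroup.subset_closure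
      exact ⟨δ, hδ, rfl⟩
    have h1 : sv (u β) = u * sv β * u⁻¹ := (sv_conj u (hR.nz hβ)).symm
    rw [huβ, hcase] at h1
    have h2 : sv β = u⁻¹ * sv δ * u := by rw [h1]; group
    rw [h2]
    exact Subgroup.mul_mem _ (Subgroup.mul_mem _ (Subgroup.inv_mem _ huW) hsvδ) huW
  · -- otherwise reflect to get a smaller positive root
    have hperm := simple_perm_pos hR hS hδ hβ₀Φ hβ₀pos hcase
    have hsmaller : ⟪sv δ β₀, p⟫ < ⟪β₀, p⟫ := by
      rw [hR.sv_apply' (hS.sub hδ) β₀, inner_sub_left, real_inner_smul_left]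
      have hδp := hS.pos δ hδ
      have : 0 < 2 * ⟪δ, β₀⟫ := by
        rw [real_inner_comm] at hip
        linarith
      nlinarith
    have hmem : sv δ β₀ ∈ A := by
      rw [hA, Finset.mem_filter]
      refine ⟨hperm.1, hperm.2, sv δ * u, ?_, ?_⟩
      · exact Subgroup.mul_mem _ (Subgroup.subset_closure ⟨δ, hδ, rfl⟩) huW
      · rw [mul_apply, huβ]
    have := hminf _ hmem
    linarith

/-- The deletion argument: a nonempty word of simple reflections fixing `p`
can be shortened by two. -/
lemma word_shorten {Φ Δ : Finset V} {p : V} (hR : RootData Φ p) (hS : SimpData Φ p Δ)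
    {ds : List V} (hds : ∀ δ ∈ ds, δ ∈ Δ) (hne : ds ≠ [])
    (hwp : ((ds.map sv).prod) p = p) :
    ∃ ds' : List V, (∀ δ ∈ ds', δ ∈ Δ) ∧ ((ds'.map sv).prod) = ((ds.map sv).prod) ∧
      ds'.length + 2 = ds.length := by
  classical
  obtain ⟨cs, δl, rfl⟩ : ∃ cs x, ds = cs ++ [x] := by
    rcases List.eq_nil_or_concat ds with h | ⟨cs, x, h⟩
    · exact absurd h hne
    · exact ⟨cs, x, by rw [h, List.concat_eq_append]⟩
  have hδlΔ : δl ∈ Δ := hds _ (by simp)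
  have hδlΦ : δl ∈ Φ := hS.sub hδlΔ
  have hδl0 : δl ≠ 0 := hR.nz hδlΦ
  set ζ : ℕ → V := fun j => (((cs ++ [δl]).drop j).map sv).prod δl with hζ
  have hζtop : ζ cs.length = -δl := by
    rw [hζ]
    simp only
    rw [List.drop_append_of_le_length le_rfl, List.drop_eq_nil_of_le le_rfl,
      List.nil_append, List.map_cons, List.map_nil, List.prod_cons, List.prod_nil, mul_one]
    exact sv_apply_self hδl0
  have hstep : ∀ j, (hj : j < cs.length) → ζ j = sv (cs[j]'hj) (ζ (j+1)) := by
    intro j hj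
    rw [hζ]
    simp only
    have hj' : j < (cs ++ [δl]).length := by
      rw [List.length_append, List.length_cons, List.length_nil]
      omega
    rw [List.drop_eq_getElem_cons hj', List.map_cons, List.prod_cons, mul_apply,
      List.getElem_append_left hj]
  have hmemcs : ∀ j, (hj : j < cs.length) → (cs[j]'hj) ∈ Δ := by
    intro j hj
    exact hds _ (by
      apply List.mem_append_left
      exact List.getElem_mem _)
  have hmem : ∀ j, j ≤ cs.length → ζ j ∈ Φ := by
    have H : ∀ k j, j ≤ cs.length → cs.length - j ≤ k → ζ j ∈ Φ := by
      intro k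
      induction k with
      | zero =>
        intro j hj1 hj2
        have : j = cs.length := by omega
        rw [this, hζtop]
        exact hR.sneg _ hδlΦ
      | succ k ih =>
        intro j hj1 hj2
        rcases eq_or_lt_of_le hj1 with h | h
        · rw [h, hζtop]
          exact hR.sneg _ hδlΦ
        · rw [hstep j h]
          exact hR.stab _ (hS.sub (hmemcs j h)) _ (ih (j+1) (by omega) (by omega))
    exact fun j hj => H (cs.length - j) j hj le_rfl
  have hζ0 : ζ 0 = (((cs ++ [δl]).map sv).prod) δl := by
    simp only [hζ, List.drop_zero]
  have hζ0pos : 0 < ⟪ζ 0, p⟫ := by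
    rw [hζ0]
    have h1 : ⟪(((cs ++ [δl]).map sv).prod) δl, p⟫
        = ⟪(((cs ++ [δl]).map sv).prod) δl, (((cs ++ [δl]).map sv).prod) p⟫ := by
      rw [hwp]
    rw [h1, LinearIsometryEquiv.inner_map_map]
    exact hS.pos δl hδlΔ
  -- find the first sign change
  have hJne : cs.length ∈ {j : ℕ | j ≤ cs.length ∧ ¬ 0 < ⟪ζ j, p⟫} := by
    refine ⟨le_rfl, ?_⟩
    rw [hζtop, inner_neg_left]
    have := hS.pos δl hδlΔ
    linarith
  obtain ⟨j0, hj0⟩ : ∃ j, j = sInf {j : ℕ | j ≤ cs.length ∧ ¬ 0 < ⟪ζ j, p⟫} := ⟨_, rfl⟩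
  have hj0J : j0 ≤ cs.length ∧ ¬ 0 < ⟪ζ j0, p⟫ := by
    rw [hj0]
    exact Nat.sInf_mem ⟨_, hJne⟩
  obtain ⟨hj0le, hj0neg⟩ := hj0J
  have hj00 : j0 ≠ 0 := by
    intro h
    rw [h] at hj0neg
    exact hj0neg hζ0pos
  obtain ⟨m, hm⟩ : ∃ m, m = j0 - 1 := ⟨_, rfl⟩
  have hm1 : m + 1 = j0 := by omega
  have hζmpos : 0 < ⟪ζ m, p⟫ := by
    by_contra hc
    have hmJ : m ∈ {j : ℕ | j ≤ cs.length ∧ ¬ 0 < ⟪ζ j, p⟫} := ⟨by omega, hc⟩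
    have := Nat.sInf_le hmJ
    rw [← hj0] at this
    omega
  have hmlt : m < cs.length := by
    rcases eq_or_lt_of_le (show m ≤ cs.length by omega) with h | h
    · exfalso
      rw [h, hζtop, inner_neg_left] at hζmpos
      have := hS.pos δl hδlΔ
      linarith
    · exact h
  have hζm1neg : ⟪ζ (m+1), p⟫ < 0 := by
    have h1 : ¬ 0 < ⟪ζ (m+1), p⟫ := by rw [hm1]; exact hj0neg
    have h2 := hR.pne _ (hmem (m+1) (by omega))
    rcases lt_or_eq_of_le (not_lt.1 h1) with h | h
    · exact h
    · exact absurd h h2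
  have hζmstep : ζ m = sv (cs[m]'hmlt) (ζ (m+1)) := hstep m hmlt
  have hδmΔ : (cs[m]'hmlt) ∈ Δ := hmemcs m hmlt
  -- identify ζ (m+1) with the negative of the simple root at position m
  have hβ'eq : ζ (m+1) = -(cs[m]'hmlt) := by
    by_contra hc
    have hβ'Φ : -ζ (m+1) ∈ Φ := hR.sneg _ (hmem (m+1) (by omega))
    have hβ'pos : 0 < ⟪-ζ (m+1), p⟫ := by rw [inner_neg_left]; linarith
    have hβ'ne : -ζ (m+1) ≠ (cs[m]'hmlt) := by
      intro h
      apply hc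
      rw [← h]
      simp
    have hperm := simple_perm_pos hR hS hδmΔ hβ'Φ hβ'pos hβ'ne
    have h4 : sv (cs[m]'hmlt) (-ζ (m+1)) = - ζ m := by
      rw [map_neg, ← hζmstep]
    rw [h4, inner_neg_left] at hperm
    linarith [hperm.2]
  -- surgery
  have hdropsplit : (cs ++ [δl]).drop (m+1) = cs.drop (m+1) ++ [δl] :=
    List.drop_append_of_le_length (by omega)
  have hζu : ζ (m+1) = (((cs ++ [δl]).drop (m+1)).map sv).prod δl := by
    simp only [hζ]
  have hsveq : sv (cs[m]'hmlt)
      = (((cs ++ [δl]).drop (m+1)).map sv).prod * sv δl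
        * ((((cs ++ [δl]).drop (m+1)).map sv).prod)⁻¹ := by
    have h1 : sv (cs[m]'hmlt) = sv (ζ (m+1)) := by rw [hβ'eq, sv_neg]
    rw [h1, hζu]
    exact (sv_conj _ hδl0).symm
  have hsplit : ((cs ++ [δl]).map sv).prod
      = ((cs.take m).map sv).prod
        * (sv (cs[m]'hmlt) * (((cs ++ [δl]).drop (m+1)).map sv).prod) := by
    have h1 : (cs ++ [δl]).take m = cs.take m := List.take_append_of_le_length (by omega)
    have h2 : (cs ++ [δl]).drop m = (cs[m]'hmlt) :: (cs ++ [δl]).drop (m+1) := by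
      have hm' : m < (cs ++ [δl]).length := by
        rw [List.length_append, List.length_cons, List.length_nil]; omega
      rw [List.drop_eq_getElem_cons hm', List.getElem_append_left hmlt]
    calc ((cs ++ [δl]).map sv).prod
        = (((cs ++ [δl]).take m ++ (cs ++ [δl]).drop m).map sv).prod := by
          rw [List.take_append_drop]
      _ = _ := by
          rw [List.map_append, List.prod_append, h1, h2, List.map_cons, List.prod_cons]
  have htail : (((cs ++ [δl]).drop (m+1)).map sv).prod
      = ((cs.drop (m+1)).map sv).prod * sv δl := by
    rw [hdropsplit, List.map_append, List.prod_append, List.map_cons, List.map_nil,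
      List.prod_cons, List.prod_nil, mul_one]
  refine ⟨cs.take m ++ cs.drop (m+1), ?_, ?_, ?_⟩
  · intro δ hδ
    rcases List.mem_append.1 hδ with h | h
    · exact hds δ (List.mem_append_left _ (List.take_subset m cs h))
    · exact hds δ (List.mem_append_left _ (List.drop_subset (m+1) cs h))
  · rw [List.map_append, List.prod_append, hsplit, hsveq, htail]
    have hsq : sv δl * sv δl = 1 := sv_sq hδl0
    calc ((cs.take m).map sv).prod * ((cs.drop (m+1)).map sv).prod
        = ((cs.take m).map sv).prod * (((cs.drop (m+1)).map sv).prod * 1) := by rw [mul_one]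
      _ = ((cs.take m).map sv).prod * (((cs.drop (m+1)).map sv).prod * (sv δl * sv δl)) := by
          rw [hsq]
      _ = _ := by group
  · rw [List.length_append, List.length_append, List.length_take, List.length_drop,
      List.length_cons, List.length_nil]
    omega

/-- An element of the reflection group fixing the generic point `p` is the identity. -/
lemma stabilizer_trivial {Φ : Finset V} {p : V} (hR : RootData Φ p) {w : V ≃ₗᵢ[ℝ] V}
    (hw : w ∈ Subgroup.closure {t : V ≃ₗᵢ[ℝ] V | ∃ α ∈ Φ, t = sv α}) (hwp : w p = p) :
    w = 1 := by
  obtain ⟨Δ, hS⟩ := exists_simpData hR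
  have hw' : w ∈ Subgroup.closure {t : V ≃ₗᵢ[ℝ] V | ∃ δ ∈ Δ, t = sv δ} := by
    have hle : Subgroup.closure {t : V ≃ₗᵢ[ℝ] V | ∃ α ∈ Φ, t = sv α}
        ≤ Subgroup.closure {t : V ≃ₗᵢ[ℝ] V | ∃ δ ∈ Δ, t = sv δ} := by
      rw [Subgroup.closure_le]
      rintro t ⟨α, hα, rfl⟩
      exact generation hR hS hα
    exact hle hw
  have hw'' : w ∈ Subgroup.closure {t : V ≃ₗᵢ[ℝ] V | ∃ δ ∈ (↑Δ : Set V), t = sv δ} := by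
    convert hw' using 3
    rfl
  obtain ⟨ds, hds, hprod⟩ := exists_word (D := (↑Δ : Set V))
    (fun v hv => hR.nz (hS.sub hv)) hw''
  have main : ∀ k (es : List V), es.length ≤ k → (∀ δ ∈ es, δ ∈ Δ) →
      ((es.map sv).prod) p = p → (es.map sv).prod = 1 := by
    intro k
    induction k with
    | zero =>
      intro es h1 _ _
      have : es = [] := List.length_eq_zero_iff.1 (by omega)
      rw [this]
      simp
    | succ k ih =>
      intro es h1 h2 h3
      rcases eq_or_ne es [] with rfl | hne
      · simp
      · obtain ⟨es', hes', hprodeq, hlen⟩ := word_shorten hR hS h2 hne h3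
        have := ih es' (by omega) hes' (by rw [hprodeq]; exact h3)
        rw [← hprodeq]
        exact this
  have hds' : ∀ δ ∈ ds, δ ∈ Δ := fun δ h => hds δ h
  have h1 := main ds.length ds le_rfl hds' (by rw [hprod]; exact hwp)
  rw [← hprod, h1]

/-- Two unit vectors giving the same reflection agree up to sign. -/
lemma sv_inj {α β : V} (hα : ‖α‖ = 1) (hβ : ‖β‖ = 1) (h : sv α = sv β) :
    β = α ∨ β = -α := by
  have hα0 : α ≠ 0 := by intro hh; rw [hh] at hα; simp at hα
  have hβ0 : β ≠ 0 := by intro hh; rw [hh] at hβ; simp at hβ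
  have hαα : ⟪α, α⟫ = (1:ℝ) := by
    rw [real_inner_self_eq_norm_sq, hα]; norm_num
  have h1 : sv α β = -β := by rw [h, sv_apply_self hβ0]
  rw [sv_apply hα0, hαα, div_one] at h1
  rw [sub_eq_iff_eq_add] at h1
  have h2 : (2:ℝ) • β = (2:ℝ) • (⟪α, β⟫ • α) := by
    rw [smul_smul, two_smul]
    nth_rewrite 1 [h1]
    abel
  have h5 : β = ⟪α, β⟫ • α := smul_right_injective V two_ne_zero h2
  have h6 : |⟪α, β⟫| = 1 := by
    have := congrArg norm h5
    rw [norm_smul, hα, hβ, mul_one] at this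
    simpa using this.symm
  rcases abs_eq (le_of_lt one_pos) |>.1 h6 with h7 | h7
  · left; rw [h5, h7, one_smul]
  · right; rw [h5, h7, neg_one_smul]

/-- A generic point in `F` avoiding finitely many hyperplanes. -/
lemma exists_generic (F : Submodule ℝ V) (Φ : Finset V)
    (h : ∀ α ∈ Φ, ∃ x ∈ F, ⟪α, x⟫ ≠ 0) :
    ∃ p ∈ F, ∀ α ∈ Φ, ⟪α, p⟫ ≠ 0 := by
  classical
  induction Φ using Finset.induction_on with
  | empty => exact ⟨0, F.zero_mem, by simp⟩
  | @insert α s hα ih =>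
    obtain ⟨p, hpF, hp⟩ := ih (fun β hβ => h β (Finset.mem_insert_of_mem hβ))
    obtain ⟨x, hxF, hx⟩ := h α (Finset.mem_insert_self α s)
    obtain ⟨c, hc⟩ := Infinite.exists_notMem_finset
      ((insert α s).image (fun β => -⟪β, p⟫ / ⟪β, x⟫))
    refine ⟨p + c • x, F.add_mem hpF (F.smul_mem c hxF), ?_⟩
    intro β hβ
    rw [inner_add_right, real_inner_smul_right]
    by_cases hβx : ⟪β, x⟫ = 0
    · rw [hβx, mul_zero, add_zero]
      rcases Finset.mem_insert.1 hβ with rfl | hβs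
      · exact absurd hβx hx
      · exact hp β hβs
    · intro hcon
      apply hc
      rw [Finset.mem_image]
      refine ⟨β, hβ, ?_⟩
      field_simp
      linarith

/-- Claim G: for `w ≠ 1` in a finite reflection group `W` there is a reflection of `W`
whose root is orthogonal to the fixed space of `w`. -/
lemma claimG (W : Subgroup (V ≃ₗᵢ[ℝ] V)) (hWfin : Finite W)
    (hWrefl : W = Subgroup.closure {t : V ≃ₗᵢ[ℝ] V | t ∈ W ∧ IsEuclideanReflection t})
    {w : V ≃ₗᵢ[ℝ] V} (hw : w ∈ W) (hw1 : w ≠ 1) :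
    ∃ τ : V, τ ≠ 0 ∧ sv τ ∈ W ∧ τ ∈ (fixS w)ᗮ := by
  classical
  have hTne : {t : V ≃ₗᵢ[ℝ] V | t ∈ W ∧ IsEuclideanReflection t}.Nonempty := by
    by_contra hemp
    rw [Set.not_nonempty_iff_eq_empty] at hemp
    rw [hemp, Subgroup.closure_empty] at hWrefl
    rw [hWrefl, Subgroup.mem_bot] at hw
    exact hw1 hw
  by_cases hF : fixS w = ⊥
  · obtain ⟨t, htW, htrefl⟩ := hTne
    obtain ⟨τ, hτ1, rfl⟩ := eq_sv_of_isReflection htrefl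
    refine ⟨τ, ?_, htW, ?_⟩
    · intro hh; rw [hh] at hτ1; simp at hτ1
    · rw [hF, Submodule.bot_orthogonal_eq_top]
      exact Submodule.mem_top
  · by_contra hcon
    push_neg at hcon
    set Φs : Set V := {α : V | ‖α‖ = 1 ∧ sv α ∈ W} with hΦs
    have hΦfin : Φs.Finite := by
      have hWsetfin : (W : Set (V ≃ₗᵢ[ℝ] V)).Finite := by
        have : Finite (W : Set (V ≃ₗᵢ[ℝ] V)) := hWfin
        exact Set.toFinite _
      have hsub : Φs ⊆ ⋃ t ∈ (W : Set (V ≃ₗᵢ[ℝ] V)), {α : V | ‖α‖ = 1 ∧ sv α = t} := by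
        intro α hα
        exact Set.mem_biUnion hα.2 ⟨hα.1, rfl⟩
      refine Set.Finite.subset (Set.Finite.biUnion hWsetfin ?_) hsub
      intro t ht
      by_cases hfe : ∃ α₀ : V, ‖α₀‖ = 1 ∧ sv α₀ = t
      · obtain ⟨α₀, hn0, ht0⟩ := hfe
        apply Set.Finite.subset ((Set.finite_singleton (-α₀)).insert α₀)
        intro α hαmem
        have h3 : sv α₀ = sv α := by rw [ht0, hαmem.2]
        rcases sv_inj hn0 hαmem.1 h3 with h | h
        · rw [h]; exact Set.mem_insert _ _
        · rw [h]; exact Set.mem_insert_of_mem _ rfl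
      · apply Set.Finite.subset (Set.finite_empty)
        intro α hαmem
        exact absurd ⟨α, hαmem.1, hαmem.2⟩ hfe
    set Φ : Finset V := hΦfin.toFinset with hΦ
    have hroot : ∀ α ∈ Φ, ‖α‖ = 1 ∧ sv α ∈ W := by
      intro α hα
      rwa [hΦ, Set.Finite.mem_toFinset] at hα
    have hrootmem : ∀ α : V, ‖α‖ = 1 → sv α ∈ W → α ∈ Φ := by
      intro α h1 h2
      rw [hΦ, Set.Finite.mem_toFinset]
      exact ⟨h1, h2⟩
    have hαnz : ∀ α ∈ Φ, α ≠ 0 := by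
      intro α hα hh
      have := (hroot α hα).1
      rw [hh] at this
      simp at this
    have havoid : ∀ α ∈ Φ, ∃ x ∈ fixS w, ⟪α, x⟫ ≠ 0 := by
      intro α hα
      have h1 := hcon α (hαnz α hα) (hroot α hα).2
      rw [Submodule.mem_orthogonal] at h1
      push_neg at h1
      obtain ⟨x, hx1, hx2⟩ := h1
      exact ⟨x, hx1, by rwa [real_inner_comm] at hx2⟩
    obtain ⟨p, hpF, hp⟩ := exists_generic (fixS w) Φ havoid
    have hRdata : RootData Φ p := by
      refine ⟨fun α hα => (hroot α hα).1, ?_, hp, ?_⟩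
      · intro α hα
        refine hrootmem _ ?_ ?_
        · rw [norm_neg]; exact (hroot α hα).1
        · rw [sv_neg]; exact (hroot α hα).2
      · intro α hα β hβ
        refine hrootmem _ ?_ ?_
        · rw [LinearIsometryEquiv.norm_map]; exact (hroot β hβ).1
        · have h2 : sv (sv α β) = sv α * sv β * (sv α)⁻¹ :=
            (sv_conj (sv α) (hαnz β hβ)).symm
          rw [h2]
          exact W.mul_mem (W.mul_mem (hroot α hα).2 (hroot β hβ).2)
            (W.inv_mem (hroot α hα).2)
    have hwp : w p = p := mem_fixS_iff.1 hpF
    have hwcl : w ∈ Subgroup.closure {t : V ≃ₗᵢ[ℝ] V | ∃ α ∈ Φ, t = sv α} := by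
      rw [hWrefl] at hw
      refine Subgroup.closure_mono ?_ hw
      intro t ht
      obtain ⟨τ, hτ1, rfl⟩ := eq_sv_of_isReflection ht.2
      exact ⟨τ, hrootmem τ hτ1 ht.1, rfl⟩
    exact hw1 (stabilizer_trivial hRdata hwcl hwp)

/-- Upper bound: every element of `W` is a product of at most `codim Fix(w)` reflections
of `W`. -/
lemma upperBound (W : Subgroup (V ≃ₗᵢ[ℝ] V)) (hWfin : Finite W)
    (hWrefl : W = Subgroup.closure {t : V ≃ₗᵢ[ℝ] V | t ∈ W ∧ IsEuclideanReflection t}) :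
    ∀ k (w : V ≃ₗᵢ[ℝ] V), w ∈ W →
      Module.finrank ℝ V - Module.finrank ℝ (fixS w) ≤ k →
    ∃ l : List (V ≃ₗᵢ[ℝ] V), (∀ t ∈ l, t ∈ W ∧ IsEuclideanReflection t) ∧
      l.length ≤ Module.finrank ℝ V - Module.finrank ℝ (fixS w) ∧ l.prod = w := by
  intro k
  induction k with
  | zero =>
    intro w hw hk
    have hfr : Module.finrank ℝ (fixS w) ≤ Module.finrank ℝ V := Submodule.finrank_le _
    have h1 : Module.finrank ℝ (fixS w) = Module.finrank ℝ V := by omega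
    have h2 : fixS w = ⊤ := Submodule.eq_top_of_finrank_eq h1
    refine ⟨[], by simp, by simp, ?_⟩
    rw [List.prod_nil, eq_one_of_fixS_top h2]
  | succ k ih =>
    intro w hw hk
    by_cases hw1 : w = 1
    · refine ⟨[], by simp, by simp, ?_⟩
      rw [List.prod_nil, hw1]
    · obtain ⟨τ, hτ0, hτW, hτorth⟩ := claimG W hWfin hWrefl hw hw1
      have hlt := fixS_lt_fixS_sv_mul hτ0 hτorth
      have hfr : Module.finrank ℝ (fixS w) < Module.finrank ℝ (fixS (sv τ * w)) :=
        Submodule.finrank_lt_finrank_of_lt hlt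
      have hle1 : Module.finrank ℝ (fixS (sv τ * w)) ≤ Module.finrank ℝ V :=
        Submodule.finrank_le _
      have hd : Module.finrank ℝ V - Module.finrank ℝ (fixS (sv τ * w)) ≤ k := by omega
      obtain ⟨l, hl, hlen, hprod⟩ := ih (sv τ * w) (W.mul_mem hτW hw) hd
      refine ⟨sv τ :: l, ?_, ?_, ?_⟩
      · intro t ht
        rcases List.mem_cons.1 ht with rfl | h
        · exact ⟨hτW, isReflection_sv hτ0⟩
        · exact hl t h
      · rw [List.length_cons]
        omega
      · rw [List.prod_cons, hprod, ← mul_assoc, sv_sq hτ0, one_mul]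

end CarterAux

open CarterAux in
/-- Let `W` be a finite real reflection group on `V = ℝⁿ`.  For every
`w ∈ W`, the absolute reflection length `ℓ_T(w)` equals the codimension of the fixed
space of `w`, i.e. `ℓ_T(w) = n − dim Fix(w)`, where `Fix(w) = ker(w − Id)`. -/
theorem absoluteLength_eq_codim_fixedSpace
    {V : Type*} [NormedAddCommGroup V] [InnerProductSpace ℝ V] [FiniteDimensional ℝ V]
    (W : Subgroup (V ≃ₗᵢ[ℝ] V)) (hWfin : Finite W)
    (hWrefl : W = Subgroup.closure {t | t ∈ W ∧ IsEuclideanReflection t})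
    (w : V ≃ₗᵢ[ℝ] V) (hw : w ∈ W) :
    absoluteLength W w =
      Module.finrank ℝ V -
        Module.finrank ℝ (LinearMap.ker ((w : V →ₗ[ℝ] V) - LinearMap.id)) := by
  have hfixeq : LinearMap.ker ((w : V →ₗ[ℝ] V) - LinearMap.id) = fixS w := rfl
  rw [hfixeq]
  set S := {k : ℕ | ∃ l : List (V ≃ₗᵢ[ℝ] V),
    (∀ t ∈ l, t ∈ W ∧ IsEuclideanReflection t) ∧ l.length = k ∧ l.prod = w} with hS
  have habs : absoluteLength W w = sInf S := rfl
  -- upper bound : there is a short word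
  obtain ⟨l, hl, hlen, hprod⟩ := upperBound W hWfin hWrefl
    (Module.finrank ℝ V - Module.finrank ℝ (fixS w)) w hw le_rfl
  have hmem : l.length ∈ S := ⟨l, hl, rfl, hprod⟩
  have hupper : sInf S ≤ Module.finrank ℝ V - Module.finrank ℝ (fixS w) :=
    le_trans (Nat.sInf_le hmem) hlen
  -- lower bound
  have hSne : S.Nonempty := ⟨l.length, hmem⟩
  obtain ⟨l₀, hl₀, hlen₀, hprod₀⟩ := Nat.sInf_mem hSne
  have hlow := lowerBound l₀ (fun t ht => (hl₀ t ht).2)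
  rw [hprod₀] at hlow
  have hfr : Module.finrank ℝ (fixS w) ≤ Module.finrank ℝ V := Submodule.finrank_le _
  rw [habs]
  omega
end

section
/- Let W be a finite real reflection group on V, γ a Coxeter element, ϑ = (γ−1)⁻¹, and ρ₁, …, ρ_k positive roots such that the k×k matrix with entries (ϑ(ρ_i), ρ_j) is lower triangular with nonzero diagonal (i.e., (ϑ(ρ_i), ρ_j) = 0 for all i < j). Then ρ₁, …, ρ_k are linearly independent, and hence t_{ρ₁} ⋯ t_{ρ_k} is T-reduced. -/
open scoped RealInnerProductSpace

section Helpers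

variable {V : Type*} [NormedAddCommGroup V] [InnerProductSpace ℝ V]

lemma refl_aux_invol (t : V ≃ₗᵢ[ℝ] V) (ρ : V) (hρ : ρ ≠ 0)
    (ht : ∀ x : V, t x = x - (2 * ⟪ρ, x⟫ / ⟪ρ, ρ⟫) • ρ) (x : V) : t (t x) = x := by
  have hρρ : ⟪ρ, ρ⟫ ≠ 0 := fun h => hρ (inner_self_eq_zero.mp h)
  rw [ht, ht]
  rw [inner_sub_right, real_inner_smul_right]
  have : (2 * (⟪ρ, x⟫ - 2 * ⟪ρ, x⟫ / ⟪ρ, ρ⟫ * ⟪ρ, ρ⟫) / ⟪ρ, ρ⟫) = -(2 * ⟪ρ, x⟫ / ⟪ρ, ρ⟫) := by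
    field_simp; ring
  rw [this]
  module

lemma refl_prod_sub_mem_span : ∀ (k : ℕ) (ρ : Fin k → V) (t : Fin k → (V ≃ₗᵢ[ℝ] V)),
    (∀ i x, t i x = x - (2 * ⟪ρ i, x⟫ / ⟪ρ i, ρ i⟫) • ρ i) → ∀ v : V,
    (List.ofFn t).prod v - v ∈ Submodule.span ℝ (Set.range ρ) := by
  intro k
  induction k with
  | zero =>
    intro ρ t ht v
    simp
  | succ n IH =>
    intro ρ t ht v
    rw [List.ofFn_succ, List.prod_cons]
    have hmul : ∀ y, (t 0 * (List.ofFn fun i => t i.succ).prod) y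
        = t 0 ((List.ofFn fun i => t i.succ).prod y) := fun _ => rfl
    set w' := (List.ofFn fun i : Fin n => t i.succ).prod with hw'
    have h1 : w' v - v ∈ Submodule.span ℝ (Set.range (fun i : Fin n => ρ i.succ)) :=
      IH (fun i => ρ i.succ) (fun i => t i.succ) (fun i x => ht i.succ x) v
    have h2 : Submodule.span ℝ (Set.range (fun i : Fin n => ρ i.succ))
        ≤ Submodule.span ℝ (Set.range ρ) := by
      apply Submodule.span_mono
      rintro _ ⟨i, rfl⟩; exact ⟨i.succ, rfl⟩
    have h3 : (t 0 * w') v - v = (w' v - v) - (2 * ⟪ρ 0, w' v⟫ / ⟪ρ 0, ρ 0⟫) • ρ 0 := by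
      rw [hmul, ht 0]; abel
    rw [h3]
    exact Submodule.sub_mem _ (h2 h1)
      (Submodule.smul_mem _ _ (Submodule.subset_span ⟨0, rfl⟩))

lemma refl_prod_fixed : ∀ (k : ℕ) (ρ : Fin k → V), LinearIndependent ℝ ρ →
    ∀ (t : Fin k → (V ≃ₗᵢ[ℝ] V)),
    (∀ i x, t i x = x - (2 * ⟪ρ i, x⟫ / ⟪ρ i, ρ i⟫) • ρ i) → ∀ v : V,
    (List.ofFn t).prod v = v → ∀ i, ⟪ρ i, v⟫ = 0 := by
  intro k
  induction k with
  | zero => intro ρ _ t _ v _ i; exact absurd i.2 (by simp)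
  | succ n IH =>
    intro ρ hρli t ht v hv
    have hρ0 : ρ 0 ≠ 0 := hρli.ne_zero 0
    have hρρ : ⟪ρ 0, ρ 0⟫ ≠ 0 := fun h => hρ0 (inner_self_eq_zero.mp h)
    rw [List.ofFn_succ, List.prod_cons] at hv
    set w' := (List.ofFn fun i : Fin n => t i.succ).prod with hw'
    have hmul : (t 0 * w') v = t 0 (w' v) := rfl
    rw [hmul] at hv
    have hinv := refl_aux_invol (t 0) (ρ 0) hρ0 (ht 0)
    have hw'v : w' v = t 0 v := by
      have := congrArg (t 0) hv
      rw [hinv] at this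
      exact this
    have h1 : w' v - v ∈ Submodule.span ℝ (Set.range (fun i : Fin n => ρ i.succ)) :=
      refl_prod_sub_mem_span n (fun i => ρ i.succ) (fun i => t i.succ)
        (fun i x => ht i.succ x) v
    set c : ℝ := 2 * ⟪ρ 0, v⟫ / ⟪ρ 0, ρ 0⟫ with hc
    have h2 : w' v - v = -(c • ρ 0) := by rw [hw'v, ht 0]; abel
    rw [h2] at h1
    rw [Submodule.mem_span_range_iff_exists_fun ℝ] at h1
    obtain ⟨b, hb⟩ := h1
    have hsum : (∑ i : Fin (n + 1), (Fin.cons c b : Fin (n+1) → ℝ) i • ρ i) = 0 := by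
      rw [Fin.sum_univ_succ]
      simp only [Fin.cons_zero, Fin.cons_succ]
      rw [hb]
      simp
    have hallzero := (Fintype.linearIndependent_iff.mp hρli) _ hsum
    have hc0 : c = 0 := by simpa using hallzero 0
    have hinner0 : ⟪ρ 0, v⟫ = 0 := by
      rw [hc, div_eq_zero_iff] at hc0
      rcases hc0 with h | h
      · linarith
      · exact absurd h hρρ
    have hfix : w' v = v := by
      rw [hw'v, ht 0, hinner0]
      simp
    have htail := IH (fun i => ρ i.succ) (hρli.comp Fin.succ (Fin.succ_injective n))
      (fun i => t i.succ) (fun i x => ht i.succ x) v hfix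
    intro i
    refine Fin.cases ?_ ?_ i
    · exact hinner0
    · exact htail

lemma refl_list_span [FiniteDimensional ℝ V] : ∀ (l : List (V ≃ₗᵢ[ℝ] V)),
    (∀ s ∈ l, IsEuclideanReflection s) →
    ∃ S : Submodule ℝ V, Module.finrank ℝ S ≤ l.length ∧ ∀ v : V, l.prod v - v ∈ S := by
  intro l
  induction l with
  | nil => exact fun _ => ⟨⊥, by simp, fun v => by simp⟩
  | cons a l IH =>
    intro hl
    obtain ⟨S, hS, hmem⟩ := IH (fun s hs => hl s (List.mem_cons_of_mem a hs))
    obtain ⟨σ, hσ0, hσ⟩ := hl a List.mem_cons_self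
    refine ⟨S ⊔ Submodule.span ℝ {σ}, ?_, ?_⟩
    · have h1 := Submodule.finrank_add_le_finrank_add_finrank S (Submodule.span ℝ {σ})
      have h2 := finrank_span_singleton (K := ℝ) hσ0
      simp only [List.length_cons]
      omega
    · intro v
      have heq : (a :: l).prod v - v
          = (l.prod v - v) + (a (l.prod v) - l.prod v) := by
        rw [List.prod_cons]
        show a (l.prod v) - v = _
        abel
      rw [heq]
      refine Submodule.add_mem _ (Submodule.mem_sup_left (hmem v)) (Submodule.mem_sup_right ?_)
      rw [hσ]
      have heq2 : l.prod v - (2 * ⟪σ, l.prod v⟫ / ⟪σ, σ⟫) • σ - l.prod v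
          = -((2 * ⟪σ, l.prod v⟫ / ⟪σ, σ⟫) • σ) := by abel
      rw [heq2]
      exact Submodule.neg_mem _ (Submodule.smul_mem _ _ (Submodule.mem_span_singleton_self σ))

end Helpers

/-- Let `W` be a finite real reflection group on `V`, `γ` a Coxeter
element, `ϑ = (γ−1)⁻¹`, and `ρ₁, …, ρ_k` positive roots such that the `k×k` matrix with
entries `(ϑ(ρ_i), ρ_j)` is lower triangular with nonzero diagonal (i.e.
`(ϑ(ρ_i), ρ_j) = 0` for all `i < j`).  Then `ρ₁, …, ρ_k` are linearly independent, and
hence `t_{ρ₁} ⋯ t_{ρ_k}` is `T`-reduced. -/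
theorem linearIndependent_of_theta_lower_triangular
    {V : Type*} [NormedAddCommGroup V] [InnerProductSpace ℝ V] [FiniteDimensional ℝ V]
    (W : Subgroup (V ≃ₗᵢ[ℝ] V)) (hWfin : Finite W)
    (hWrefl : W = Subgroup.closure {t | t ∈ W ∧ IsEuclideanReflection t})
    (γ : V ≃ₗᵢ[ℝ] V) (hγW : γ ∈ W)
    (hγfix : ∀ v : V, γ v = v → v = 0)
    (ϑ : V →ₗ[ℝ] V) (hϑ : ∀ v : V, γ (ϑ v) - ϑ v = v)
    (k : ℕ) (ρ : Fin k → V) (hρ : ∀ i, ρ i ≠ 0)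
    (t : Fin k → (V ≃ₗᵢ[ℝ] V)) (htW : ∀ i, t i ∈ W)
    (ht : ∀ i x, t i x = x - (2 * ⟪ρ i, x⟫ / ⟪ρ i, ρ i⟫) • ρ i)
    (htri : ∀ i j : Fin k, i < j → ⟪ϑ (ρ i), ρ j⟫ = 0) :
    LinearIndependent ℝ ρ ∧ absoluteLength W (List.ofFn t).prod = k := by
  -- the diagonal of the matrix is nonzero
  have hdiag : ∀ i, ⟪ϑ (ρ i), ρ i⟫ ≠ 0 := by
    intro i
    have h1 : γ (ϑ (ρ i)) = ϑ (ρ i) + ρ i := by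
      have := hϑ (ρ i); rw [sub_eq_iff_eq_add] at this; rw [this]; abel
    have h2 : ⟪γ (ϑ (ρ i)), γ (ϑ (ρ i))⟫ = ⟪ϑ (ρ i), ϑ (ρ i)⟫ :=
      γ.inner_map_map _ _
    rw [h1, real_inner_add_add_self] at h2
    have hρρ : ⟪ρ i, ρ i⟫ ≠ 0 := fun h => hρ i (inner_self_eq_zero.mp h)
    intro h
    rw [h] at h2
    simp only [mul_zero, add_zero] at h2
    exact hρρ (by linarith)
  -- linear independence
  have hli : LinearIndependent ℝ ρ := by
    rw [Fintype.linearIndependent_iff]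
    intro g hg
    have key : ∀ n : ℕ, ∀ i : Fin k, (i : ℕ) = n → g i = 0 := by
      intro n
      induction n using Nat.strong_induction_on with
      | _ n IHn =>
        intro i hi
        have h0 : ⟪ϑ (ρ i), ∑ j, g j • ρ j⟫ = 0 := by rw [hg, inner_zero_right]
        rw [inner_sum] at h0
        simp only [real_inner_smul_right] at h0
        rw [Finset.sum_eq_single i] at h0
        · rcases mul_eq_zero.mp h0 with h | h
          · exact h
          · exact absurd h (hdiag i)
        · intro j _ hji
          rcases lt_or_gt_of_ne hji with hlt | hgt
          · rw [IHn j.val (by omega) j rfl]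
            ring
          · rw [htri i j hgt]
            ring
        · intro h; exact absurd (Finset.mem_univ i) h
    intro i
    exact key i i rfl
  refine ⟨hli, ?_⟩
  -- the absolute length
  set w := (List.ofFn t).prod with hw
  set L : V →ₗ[ℝ] V := w.toLinearEquiv.toLinearMap - LinearMap.id with hL
  have hLapply : ∀ v, L v = w v - v := fun v => rfl
  set K : Submodule ℝ V := Submodule.span ℝ (Set.range ρ) with hK
  have hKrank : Module.finrank ℝ K = k := by
    rw [hK, finrank_span_eq_card hli, Fintype.card_fin]
  -- the kernel of L is contained in Kᗮ
  have hker : LinearMap.ker L ≤ Kᗮ := by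
    intro v hv
    have hfix : w v = v := by
      have : w v - v = 0 := hv
      rw [sub_eq_zero] at this; exact this
    have horth : ∀ i, ⟪ρ i, v⟫ = 0 := refl_prod_fixed k ρ hli t ht v hfix
    rw [Submodule.mem_orthogonal]
    intro u hu
    induction hu using Submodule.span_induction with
    | mem x hx => obtain ⟨i, rfl⟩ := hx; exact horth i
    | zero => simp
    | add x y _ _ hx hy => rw [inner_add_left, hx, hy]; ring
    | smul c x _ hx => rw [real_inner_smul_left, hx]; ring
  -- hence the rank of L is at least k
  have hrank_ge : k ≤ Module.finrank ℝ (LinearMap.range L) := by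
    have h1 : Module.finrank ℝ (LinearMap.ker L) ≤ Module.finrank ℝ Kᗮ :=
      Submodule.finrank_mono hker
    have h2 := Submodule.finrank_add_finrank_orthogonal K
    have h3 := LinearMap.finrank_range_add_finrank_ker L
    have h4 : Module.finrank ℝ K ≤ Module.finrank ℝ V := K.finrank_le
    omega
  have hmem : k ∈ {m : ℕ | ∃ l : List (V ≃ₗᵢ[ℝ] V),
      (∀ s ∈ l, s ∈ W ∧ IsEuclideanReflection s) ∧ l.length = k ∧ l.prod = w} := by
    refine ⟨List.ofFn t, ?_, by simp, rfl⟩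
    intro s hs
    rw [List.mem_ofFn] at hs
    obtain ⟨i, rfl⟩ := hs
    exact ⟨htW i, ρ i, hρ i, ht i⟩
  have hlow : ∀ m ∈ {m : ℕ | ∃ l : List (V ≃ₗᵢ[ℝ] V),
      (∀ s ∈ l, s ∈ W ∧ IsEuclideanReflection s) ∧ l.length = m ∧ l.prod = w}, k ≤ m := by
    rintro m ⟨l, hlrefl, hlen, hprod⟩
    obtain ⟨S, hSrank, hSmem⟩ := refl_list_span l (fun s hs => (hlrefl s hs).2)
    have hrange : LinearMap.range L ≤ S := by
      rintro _ ⟨v, rfl⟩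
      rw [hLapply, ← hprod]
      exact hSmem v
    calc k ≤ Module.finrank ℝ (LinearMap.range L) := hrank_ge
      _ ≤ Module.finrank ℝ S := Submodule.finrank_mono hrange
      _ ≤ l.length := hSrank
      _ = m := hlen
  exact le_antisymm (Nat.sInf_le hmem) (le_csInf ⟨k, hmem⟩ hlow)
end

section
/- Let 𝒜̃ be the covering noncrossing algebra of a finite Coxeter group W (generated by α_t, t ∈ T, with relations α_t² = 0 and Σ_{t₁t₂=w, ℓ_T(w)=2} α_{t₁}α_{t₂} = 0). For t ∈ T define the linear map ∇_t : 𝒜̃ → 𝒜̃ on monomials by ∇_t(α_{t₁}⋯α_{t_k}) = Σ_{i=1}^{k} (−1)^{i−1} δ_{t,t_i} α_{t₁^{t_i}} ⋯ α_{t_{i−1}^{t_i}} α_{t_{i+1}} ⋯ α_{t_k}, where s^u := u⁻¹su. Then the ∇_t satisfy ∇_t² = 0 for all t ∈ T, and Σ_{(t₁,t₂): t₁t₂=w} ∇_{t₁}∇_{t₂} = 0 for all w of absolute length 2; hence they define an action of 𝒜̃ on itself. -/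
open scoped Classical

/-- The absolute (reflection) length of `w`. -/
noncomputable def absLen {B : Type*} {W : Type*} [Group W] {M : CoxeterMatrix B}
    (cs : CoxeterSystem M W) (w : W) : ℕ :=
  sInf {k : ℕ | ∃ l : List W, (∀ t ∈ l, cs.IsReflection t) ∧ l.length = k ∧ l.prod = w}

/-- The set of reflections of a Coxeter system, as a type. -/
abbrev Refl {B : Type*} {W : Type*} [Group W] {M : CoxeterMatrix B}
    (cs : CoxeterSystem M W) : Type _ := {t : W // cs.IsReflection t}

/-- Conjugation `s^u := u⁻¹ s u` of a reflection by a group element, landing in the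
reflections again. -/
def conjR {B : Type*} {W : Type*} [Group W] {M : CoxeterMatrix B}
    {cs : CoxeterSystem M W} (s : Refl cs) (u : W) : Refl cs :=
  ⟨u⁻¹ * (s : W) * u, by have := s.2.conj u⁻¹; rwa [inv_inv] at this⟩

/-- The monomial `α_{t₁} ⋯ α_{t_k}` in the free algebra, for a list of reflections. -/
noncomputable def mono {B : Type*} {W : Type*} [Group W] {M : CoxeterMatrix B}
    (cs : CoxeterSystem M W) (l : List (Refl cs)) : FreeAlgebra ℂ (Refl cs) :=
  (l.map (FreeAlgebra.ι ℂ)).prod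

/-- The defining relations of the covering noncrossing algebra `𝒜̃`. -/
inductive CoverRel {B : Type*} {W : Type*} [Group W] [Fintype W] {M : CoxeterMatrix B}
    (cs : CoxeterSystem M W) :
    FreeAlgebra ℂ (Refl cs) → FreeAlgebra ℂ (Refl cs) → Prop
  | sq (t : Refl cs) :
      CoverRel cs (FreeAlgebra.ι ℂ t * FreeAlgebra.ι ℂ t) 0
  | sum (w : W) (h : absLen cs w = 2) :
      CoverRel cs
        (∑ p : Refl cs × Refl cs,
          if (p.1 : W) * (p.2 : W) = w then
            FreeAlgebra.ι ℂ p.1 * FreeAlgebra.ι ℂ p.2 else 0) 0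

section Aux
variable {B : Type*} {W : Type*} [Group W] {M : CoxeterMatrix B} {cs : CoxeterSystem M W}

lemma conjR_coe (s : Refl cs) (u : W) : ((conjR s u : Refl cs) : W) = u⁻¹ * (s : W) * u := rfl

lemma conjR_conjR (s : Refl cs) (u v : W) : conjR (conjR s u) v = conjR s (u * v) :=
  Subtype.ext (by simp only [conjR_coe, mul_inv_rev]; group)

lemma refl_mul_self (t : Refl cs) : (t : W) * (t : W) = 1 := t.2.mul_self

lemma refl_inv (t : Refl cs) : (t : W)⁻¹ = (t : W) := t.2.inv

lemma mono_append (l₁ l₂ : List (Refl cs)) :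
    mono cs (l₁ ++ l₂) = mono cs l₁ * mono cs l₂ := by
  simp [mono]

/-- One step of the skew-derivation on a monomial index list. -/
def D1 (l : List (Refl cs)) (i : Fin l.length) : List (Refl cs) :=
  (l.take (i : ℕ)).map (fun s => conjR s (l.get i : W)) ++ l.drop ((i : ℕ) + 1)

lemma D1_length (l : List (Refl cs)) (i : Fin l.length) :
    (D1 l i).length = l.length - 1 := by
  have := i.2
  simp [D1]
  omega

lemma D1_get_lt (l : List (Refl cs)) (i : Fin l.length) (j : ℕ) (hj : j < (i : ℕ))
    (h : j < (D1 l i).length) :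
    (D1 l i).get ⟨j, h⟩ = conjR (l.get ⟨j, by have := i.2; omega⟩) (l.get i : W) := by
  have hi := i.2
  simp only [D1, List.get_eq_getElem, List.getElem_append, List.length_map, List.length_take]
  rw [dif_pos (by omega)]
  simp [List.getElem_take, List.getElem_map]

lemma D1_get_ge (l : List (Refl cs)) (i : Fin l.length) (j : ℕ) (hj : (i : ℕ) ≤ j)
    (h : j < (D1 l i).length) (h2 : j + 1 < l.length) :
    (D1 l i).get ⟨j, h⟩ = l.get ⟨j + 1, h2⟩ := by
  have hi := i.2
  simp only [D1, List.get_eq_getElem, List.getElem_append, List.length_map, List.length_take]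
  rw [dif_neg (by omega)]
  rw [List.getElem_drop]
  congr 1
  omega

end Aux

section Swap
variable {B : Type*} {W : Type*} [Group W] {M : CoxeterMatrix B} {cs : CoxeterSystem M W}

lemma D1_D1_swap (l : List (Refl cs)) (a : Fin l.length) (j : Fin (D1 l a).length)
    (hja : (j : ℕ) < (a : ℕ)) (b : Fin l.length) (hb : (b : ℕ) = (j : ℕ))
    (j' : Fin (D1 l b).length) (hj' : (j' : ℕ) = (a : ℕ) - 1) :
    D1 (D1 l a) j = D1 (D1 l b) j' := by
  have ha := a.2
  have hb2 := b.2
  have hj2 := j.2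
  have hj'22 := j'.2
  have hlen := D1_length l a
  have hlenb := D1_length l b
  have hgj : (D1 l a).get j = conjR (l.get b) (l.get a : W) := by
    rw [show j = ⟨(j:ℕ), j.2⟩ from rfl, D1_get_lt l a (j:ℕ) hja j.2]
    exact congrArg (fun x : Fin l.length => conjR (l.get x) (l.get a : W)) (Fin.ext hb.symm)
  have hgj' : (D1 l b).get j' = l.get a := by
    rw [show j' = ⟨(j':ℕ), j'.2⟩ from rfl,
        D1_get_ge l b (j':ℕ) (by omega) j'.2 (by omega)]
    exact congrArg l.get (Fin.ext (show (j':ℕ)+1 = (a:ℕ) by omega))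
  show ((D1 l a).take (j:ℕ)).map (fun s => conjR s ((D1 l a).get j : W)) ++ (D1 l a).drop ((j:ℕ)+1)
      = ((D1 l b).take (j':ℕ)).map (fun s => conjR s ((D1 l b).get j' : W)) ++ (D1 l b).drop ((j':ℕ)+1)
  rw [hgj, hgj']
  simp only [D1]
  rw [List.take_append, List.drop_append,
      List.take_append, List.drop_append]
  simp only [List.length_map, List.length_take]
  rw [show min (a:ℕ) l.length = (a:ℕ) by omega, show min (b:ℕ) l.length = (b:ℕ) by omega,
      show (j:ℕ) - (a:ℕ) = 0 by omega, show ((j:ℕ)+1) - (a:ℕ) = 0 by omega]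
  simp only [List.take_zero, List.drop_zero, List.append_nil]
  simp only [← List.map_take, ← List.map_drop, List.map_map, List.map_append, List.take_take,
    List.drop_take]
  rw [show ((j:ℕ) ⊓ (a:ℕ)) = (j:ℕ) by omega, show ((j':ℕ) ⊓ (b:ℕ)) = (b:ℕ) by omega,
      show ((b:ℕ) - ((j':ℕ) + 1)) = 0 by omega, List.drop_drop,
      show ((b:ℕ) + 1 + ((j':ℕ) + 1 - (b:ℕ))) = (a:ℕ) + 1 by omega,
      show ((j':ℕ) - (b:ℕ)) = (a:ℕ) - ((j:ℕ) + 1) by omega]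
  simp only [List.take_zero, List.map_nil, List.nil_append, List.append_assoc]
  rw [show List.take (b:ℕ) l = List.take (j:ℕ) l by rw [hb],
      show List.drop ((b:ℕ)+1) l = List.drop ((j:ℕ)+1) l by rw [hb]]
  congr 1
  · apply List.map_congr_left
    intro s _
    simp only [Function.comp_apply]
    rw [conjR_conjR, conjR_conjR]
    congr 1
    rw [conjR_coe]
    group

end Swap

section Span
variable {B : Type*} {W : Type*} [Group W] [Fintype W] {M : CoxeterMatrix B}
  {cs : CoxeterSystem M W}

lemma mem_span_mono (x : FreeAlgebra ℂ (Refl cs)) :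
    x ∈ Submodule.span ℂ (Set.range (mono cs)) := by
  refine FreeAlgebra.induction ℂ _ ?_ ?_ ?_ ?_ x
  · intro r
    rw [Algebra.algebraMap_eq_smul_one]
    exact Submodule.smul_mem _ _ (Submodule.subset_span ⟨[], by simp [mono]⟩)
  · intro t
    exact Submodule.subset_span ⟨[t], by simp [mono]⟩
  · intro a b ha hb
    have hmul := Submodule.mul_mem_mul ha hb
    rw [Submodule.span_mul_span] at hmul
    refine Submodule.span_le.2 ?_ hmul
    rintro z hz
    rw [Set.mem_mul] at hz
    obtain ⟨u, ⟨l1, rfl⟩, v, ⟨l2, rfl⟩, rfl⟩ := hz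
    exact Submodule.subset_span ⟨l1 ++ l2, mono_append l1 l2⟩
  · intro a b ha hb
    exact Submodule.add_mem _ ha hb

lemma eq_zero_of_mono (G : RingQuot (CoverRel cs) →ₗ[ℂ] RingQuot (CoverRel cs))
    (h : ∀ l : List (Refl cs), G (RingQuot.mkAlgHom ℂ (CoverRel cs) (mono cs l)) = 0) :
    G = 0 := by
  apply LinearMap.ext
  intro y
  obtain ⟨x, rfl⟩ := RingQuot.mkAlgHom_surjective ℂ (CoverRel cs) y
  have hx := mem_span_mono (cs := cs) x
  have hle : Submodule.span ℂ (Set.range (mono cs)) ≤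
      LinearMap.ker (G ∘ₗ (RingQuot.mkAlgHom ℂ (CoverRel cs)).toLinearMap) := by
    rw [Submodule.span_le]
    rintro _ ⟨l, rfl⟩
    simpa using h l
  simpa using hle hx

end Span

section Nabla
variable {B : Type*} {W : Type*} [Group W] [Fintype W] {M : CoxeterMatrix B}
  {cs : CoxeterSystem M W}

lemma nabla_apply_mono
    (nabla : Refl cs → (RingQuot (CoverRel cs) →ₗ[ℂ] RingQuot (CoverRel cs)))
    (hnabla : ∀ (t : Refl cs) (l : List (Refl cs)),
      nabla t (RingQuot.mkAlgHom ℂ (CoverRel cs) (mono cs l)) =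
        ∑ i : Fin l.length, ((-1 : ℂ) ^ (i : ℕ)) •
          (if t = l.get i then
            RingQuot.mkAlgHom ℂ (CoverRel cs)
              (mono cs ((l.take (i : ℕ)).map (fun s => conjR s (l.get i : W))
                ++ l.drop ((i : ℕ) + 1)))
          else 0))
    (t : Refl cs) (l : List (Refl cs)) :
    nabla t (RingQuot.mkAlgHom ℂ (CoverRel cs) (mono cs l)) =
      ∑ i : Fin l.length, ((-1 : ℂ) ^ (i : ℕ)) •
        (if t = l.get i then RingQuot.mkAlgHom ℂ (CoverRel cs) (mono cs (D1 l i)) else 0) :=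
  hnabla t l

lemma nabla_comp_apply_mono
    (nabla : Refl cs → (RingQuot (CoverRel cs) →ₗ[ℂ] RingQuot (CoverRel cs)))
    (hnabla : ∀ (t : Refl cs) (l : List (Refl cs)),
      nabla t (RingQuot.mkAlgHom ℂ (CoverRel cs) (mono cs l)) =
        ∑ i : Fin l.length, ((-1 : ℂ) ^ (i : ℕ)) •
          (if t = l.get i then
            RingQuot.mkAlgHom ℂ (CoverRel cs)
              (mono cs ((l.take (i : ℕ)).map (fun s => conjR s (l.get i : W))
                ++ l.drop ((i : ℕ) + 1)))
          else 0))
    (t₁ t₂ : Refl cs) (l : List (Refl cs)) :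
    nabla t₁ (nabla t₂ (RingQuot.mkAlgHom ℂ (CoverRel cs) (mono cs l))) =
      ∑ i : Fin l.length, ∑ j : Fin (l.length - 1),
        ((-1 : ℂ) ^ ((i : ℕ) + (j : ℕ))) •
          (if t₁ = (D1 l i).get (Fin.cast (D1_length l i).symm j) ∧ t₂ = l.get i then
            RingQuot.mkAlgHom ℂ (CoverRel cs)
              (mono cs (D1 (D1 l i) (Fin.cast (D1_length l i).symm j)))
          else 0) := by
  rw [nabla_apply_mono nabla hnabla t₂ l, map_sum]
  refine Finset.sum_congr rfl ?_
  intro i _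
  rw [map_smul]
  by_cases h2 : t₂ = l.get i
  · rw [if_pos h2, nabla_apply_mono nabla hnabla t₁ (D1 l i)]
    rw [Finset.smul_sum]
    rw [← Fintype.sum_equiv (finCongr (D1_length l i)) _
      (fun j : Fin (l.length - 1) => ((-1 : ℂ) ^ ((i : ℕ) + (j : ℕ))) •
        (if t₁ = (D1 l i).get (Fin.cast (D1_length l i).symm j) ∧ t₂ = l.get i then
          RingQuot.mkAlgHom ℂ (CoverRel cs)
            (mono cs (D1 (D1 l i) (Fin.cast (D1_length l i).symm j)))
        else 0)) ?_]
    intro j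
    have hc : Fin.cast (D1_length l i).symm (finCongr (D1_length l i) j) = j := rfl
    rw [hc, smul_smul, ← pow_add]
    refine congrArg₂ (· • ·) rfl ?_
    simp [h2]
  · rw [if_neg h2, map_zero, smul_zero]
    symm
    refine Finset.sum_eq_zero ?_
    intro j _
    rw [if_neg (by tauto), smul_zero]

end Nabla

section Cancel
variable {B : Type*} {W : Type*} [Group W] [Fintype W] {M : CoxeterMatrix B}
  {cs : CoxeterSystem M W}

/-- The sign-reversing involution on index pairs. -/
def swapIdx {k : ℕ} (p : Fin k × Fin (k - 1)) : Fin k × Fin (k - 1) :=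
  if h : (p.2 : ℕ) < (p.1 : ℕ) then
    (⟨(p.2 : ℕ), by have := p.2.2; omega⟩,
     ⟨(p.1 : ℕ) - 1, by have := p.1.2; have := p.2.2; omega⟩)
  else
    (⟨(p.2 : ℕ) + 1, by have := p.2.2; omega⟩,
     ⟨(p.1 : ℕ), by have := p.2.2; omega⟩)

lemma swapIdx_swapIdx {k : ℕ} (p : Fin k × Fin (k - 1)) : swapIdx (swapIdx p) = p := by
  rcases p with ⟨i, j⟩
  have hi := i.2
  have hj := j.2
  simp only [swapIdx]
  split_ifs with h1 h2 h3 <;>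
    first
      | (exfalso; simp_all; omega)
      | (refine Prod.ext (Fin.ext ?_) (Fin.ext ?_) <;> simp_all <;> omega)
      | (exfalso; simp only [not_lt] at h3; omega)

lemma swapIdx_ne {k : ℕ} (p : Fin k × Fin (k - 1)) : swapIdx p ≠ p := by
  rcases p with ⟨i, j⟩
  intro heq
  have := congrArg (fun q : Fin k × Fin (k - 1) => (q.1 : ℕ)) heq
  by_cases h : (j : ℕ) < (i : ℕ)
  · rw [swapIdx, dif_pos h] at this
    simp at this
    omega
  · rw [swapIdx, dif_neg h] at this
    simp at this
    omega

lemma cancel (l : List (Refl cs))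
    (C : Fin l.length → Fin (l.length - 1) → Prop) [∀ i j, Decidable (C i j)]
    (hC : ∀ (i : Fin l.length) (j : Fin (l.length - 1)) (h : (j : ℕ) < (i : ℕ))
        (h1 : (j : ℕ) < l.length) (h2 : (i : ℕ) - 1 < l.length - 1),
        C i j ↔ C ⟨(j : ℕ), h1⟩ ⟨(i : ℕ) - 1, h2⟩) :
    ∑ i : Fin l.length, ∑ j : Fin (l.length - 1),
      ((-1 : ℂ) ^ ((i : ℕ) + (j : ℕ))) •
        (if C i j then RingQuot.mkAlgHom ℂ (CoverRel cs)
            (mono cs (D1 (D1 l i) (Fin.cast (D1_length l i).symm j))) else 0) = 0 := by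
  suffices main : ∑ p : Fin l.length × Fin (l.length - 1),
      ((-1 : ℂ) ^ ((p.1 : ℕ) + (p.2 : ℕ))) •
        (if C p.1 p.2 then RingQuot.mkAlgHom ℂ (CoverRel cs)
            (mono cs (D1 (D1 l p.1) (Fin.cast (D1_length l p.1).symm p.2))) else 0) = 0 by
    rw [Fintype.sum_prod_type] at main
    simpa using main
  set f : Fin l.length × Fin (l.length - 1) → RingQuot (CoverRel cs) := fun p =>
    ((-1 : ℂ) ^ ((p.1 : ℕ) + (p.2 : ℕ))) •
      (if C p.1 p.2 then RingQuot.mkAlgHom ℂ (CoverRel cs)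
          (mono cs (D1 (D1 l p.1) (Fin.cast (D1_length l p.1).symm p.2))) else 0) with hf
  have key : ∀ p : Fin l.length × Fin (l.length - 1), ((p.2 : ℕ) < (p.1 : ℕ)) →
      f p + f (swapIdx p) = 0 := by
    rintro ⟨i, j⟩ h
    have h1 : (j : ℕ) < l.length := by have := j.2; omega
    have h2 : (i : ℕ) - 1 < l.length - 1 := by have := i.2; have := j.2; omega
    rw [swapIdx, dif_pos h]
    simp only [hf]
    have hMC : C ⟨(j : ℕ), h1⟩ ⟨(i : ℕ) - 1, h2⟩ ↔ C i j := (hC i j h h1 h2).symm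
    have hM : D1 (D1 l ⟨(j : ℕ), h1⟩)
          (Fin.cast (D1_length l ⟨(j : ℕ), h1⟩).symm ⟨(i : ℕ) - 1, h2⟩) =
        D1 (D1 l i) (Fin.cast (D1_length l i).symm j) := by
      refine (D1_D1_swap l i (Fin.cast (D1_length l i).symm j) h ⟨(j : ℕ), h1⟩ rfl
        (Fin.cast (D1_length l ⟨(j : ℕ), h1⟩).symm ⟨(i : ℕ) - 1, h2⟩) rfl).symm
    rw [if_congr hMC (by rw [hM]) rfl]
    have hsg : ((-1 : ℂ) ^ ((i : ℕ) + (j : ℕ)))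
        = -((-1 : ℂ) ^ ((j : ℕ) + ((i : ℕ) - 1))) := by
      rw [show (i : ℕ) + (j : ℕ) = ((j : ℕ) + ((i : ℕ) - 1)) + 1 by
            simp only [Prod.snd, Prod.fst] at h; omega,
          pow_succ]
      ring
    rw [hsg]
    split_ifs with hc
    · module
    · simp
  refine Finset.sum_ninvolution swapIdx ?_ (fun p _ => swapIdx_ne p)
    (fun _ => Finset.mem_univ _) swapIdx_swapIdx
  intro p
  by_cases h : (p.2 : ℕ) < (p.1 : ℕ)
  · exact key p h
  · have h' : ((swapIdx p).2 : ℕ) < ((swapIdx p).1 : ℕ) := by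
      rcases p with ⟨i, j⟩
      rw [swapIdx, dif_neg h]
      simp only [Prod.snd, Prod.fst] at h ⊢
      omega
    have := key (swapIdx p) h'
    rw [swapIdx_swapIdx] at this
    rw [add_comm]
    exact this
end Cancel

section Conds
variable {B : Type*} {W : Type*} [Group W] {M : CoxeterMatrix B} {cs : CoxeterSystem M W}

lemma conjR_mul_right (s t : Refl cs) : ((conjR s (t : W)) : W) * (t : W) = (t : W) * (s : W) := by
  rw [conjR_coe, refl_inv, mul_assoc, mul_assoc, refl_mul_self, mul_one]

lemma D1_get_cast_lt (l : List (Refl cs)) (i : Fin l.length) (j : Fin (l.length - 1))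
    (h : (j : ℕ) < (i : ℕ)) (h1 : (j : ℕ) < l.length) :
    (D1 l i).get (Fin.cast (D1_length l i).symm j) = conjR (l.get ⟨(j : ℕ), h1⟩) (l.get i : W) :=
  D1_get_lt l i (j : ℕ) h _

lemma D1_get_cast_ge (l : List (Refl cs)) (b : Fin l.length) (j' : Fin (l.length - 1))
    (hge : (b : ℕ) ≤ (j' : ℕ)) (hlt : (j' : ℕ) + 1 < l.length) :
    (D1 l b).get (Fin.cast (D1_length l b).symm j') = l.get ⟨(j' : ℕ) + 1, hlt⟩ :=
  D1_get_ge l b (j' : ℕ) hge _ hlt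

lemma cond1_iff (t : Refl cs) (l : List (Refl cs)) (i : Fin l.length) (j : Fin (l.length - 1))
    (h : (j : ℕ) < (i : ℕ)) (h1 : (j : ℕ) < l.length) (h2 : (i : ℕ) - 1 < l.length - 1) :
    ((t = (D1 l i).get (Fin.cast (D1_length l i).symm j) ∧ t = l.get i) ↔
      (t = (D1 l ⟨(j : ℕ), h1⟩).get
          (Fin.cast (D1_length l ⟨(j : ℕ), h1⟩).symm ⟨(i : ℕ) - 1, h2⟩)
        ∧ t = l.get ⟨(j : ℕ), h1⟩)) := by
  have hi := i.2
  have hj := j.2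
  rw [D1_get_cast_lt l i j h h1,
      D1_get_cast_ge l ⟨(j : ℕ), h1⟩ ⟨(i : ℕ) - 1, h2⟩ (by simp; omega) (by simp; omega),
      show (⟨((⟨(i : ℕ) - 1, h2⟩ : Fin (l.length - 1)) : ℕ) + 1, by simp; omega⟩ : Fin l.length) = i
        from Fin.ext (by simp; omega)]
  constructor
  · rintro ⟨hA, hB⟩
    refine ⟨hB, Subtype.ext ?_⟩
    have hv : (t : W) = ((l.get i : W))⁻¹ * (l.get ⟨(j : ℕ), h1⟩ : W) * (l.get i : W) :=
      congrArg Subtype.val hA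
    have ht : (t : W) = (l.get i : W) := congrArg Subtype.val hB
    rw [← ht] at hv
    have h3 : (t : W) * (t : W) * (t : W)⁻¹ = ((l.get ⟨(j : ℕ), h1⟩ : Refl cs) : W) := by
      nth_rewrite 2 [hv]
      group
    rw [← h3]
    group
  · rintro ⟨hA, hB⟩
    refine ⟨Subtype.ext ?_, hA⟩
    rw [conjR_coe, ← congrArg Subtype.val hA, ← congrArg Subtype.val hB]
    group

end Conds

section Conds2
variable {B : Type*} {W : Type*} [Group W] {M : CoxeterMatrix B} {cs : CoxeterSystem M W}

lemma cond2_iff (w : W) (l : List (Refl cs)) (i : Fin l.length) (j : Fin (l.length - 1))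
    (h : (j : ℕ) < (i : ℕ)) (h1 : (j : ℕ) < l.length) (h2 : (i : ℕ) - 1 < l.length - 1) :
    ((((D1 l i).get (Fin.cast (D1_length l i).symm j) : W) * (l.get i : W) = w) ↔
      (((D1 l ⟨(j : ℕ), h1⟩).get
          (Fin.cast (D1_length l ⟨(j : ℕ), h1⟩).symm ⟨(i : ℕ) - 1, h2⟩) : W)
        * (l.get ⟨(j : ℕ), h1⟩ : W) = w)) := by
  have hi := i.2
  have hj := j.2
  rw [D1_get_cast_lt l i j h h1,
      D1_get_cast_ge l ⟨(j : ℕ), h1⟩ ⟨(i : ℕ) - 1, h2⟩ (by simp; omega) (by simp; omega),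
      show (⟨((⟨(i : ℕ) - 1, h2⟩ : Fin (l.length - 1)) : ℕ) + 1, by simp; omega⟩ : Fin l.length) = i
        from Fin.ext (by simp; omega),
      conjR_mul_right]

end Conds2

/-- Let `𝒜̃` be the covering noncrossing algebra of a finite Coxeter
group `W`.  The skew-derivations `∇_t` (given on monomials by
`∇_t(α_{t₁}⋯α_{t_k}) = Σ_i (−1)^{i−1} δ_{t,t_i} α_{t₁^{t_i}}⋯α_{t_{i−1}^{t_i}}
α_{t_{i+1}}⋯α_{t_k}`) satisfy `∇_t² = 0` for all reflections `t`, and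
`Σ_{(t₁,t₂): t₁t₂ = w} ∇_{t₁}∇_{t₂} = 0` for all `w` of absolute length `2`;
hence they define an action of the algebra `𝒜̃` on itself. -/
theorem cover_nabla_relations (B : Type*) (W : Type*) [Group W] [Fintype W]
    (M : CoxeterMatrix B) (cs : CoxeterSystem M W)
    (nabla : Refl cs → (RingQuot (CoverRel cs) →ₗ[ℂ] RingQuot (CoverRel cs)))
    (hnabla : ∀ (t : Refl cs) (l : List (Refl cs)),
      nabla t (RingQuot.mkAlgHom ℂ (CoverRel cs) (mono cs l)) =
        ∑ i : Fin l.length, ((-1 : ℂ) ^ (i : ℕ)) •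
          (if t = l.get i then
            RingQuot.mkAlgHom ℂ (CoverRel cs)
              (mono cs ((l.take (i : ℕ)).map (fun s => conjR s (l.get i : W))
                ++ l.drop ((i : ℕ) + 1)))
          else 0)) :
    (∀ t : Refl cs, nabla t ∘ₗ nabla t = 0) ∧
      (∀ w : W, absLen cs w = 2 →
        ∑ p : Refl cs × Refl cs,
          (if (p.1 : W) * (p.2 : W) = w then nabla p.1 ∘ₗ nabla p.2 else 0) = 0) := by
  constructor
  · intro t
    apply eq_zero_of_mono
    intro l
    rw [LinearMap.comp_apply, nabla_comp_apply_mono nabla hnabla t t l]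
    exact cancel l
      (fun i j => t = (D1 l i).get (Fin.cast (D1_length l i).symm j) ∧ t = l.get i)
      (fun i j h h1 h2 => cond1_iff t l i j h h1 h2)
  · intro w _
    apply eq_zero_of_mono
    intro l
    rw [LinearMap.sum_apply]
    have step1 : ∀ p : Refl cs × Refl cs,
        (if (p.1 : W) * (p.2 : W) = w then nabla p.1 ∘ₗ nabla p.2 else 0)
            (RingQuot.mkAlgHom ℂ (CoverRel cs) (mono cs l)) =
          ∑ i : Fin l.length, ∑ j : Fin (l.length - 1),
            (if (p.1 : W) * (p.2 : W) = w then
              ((-1 : ℂ) ^ ((i : ℕ) + (j : ℕ))) •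
                (if p.1 = (D1 l i).get (Fin.cast (D1_length l i).symm j) ∧ p.2 = l.get i then
                  RingQuot.mkAlgHom ℂ (CoverRel cs)
                    (mono cs (D1 (D1 l i) (Fin.cast (D1_length l i).symm j)))
                else 0)
            else 0) := by
      intro p
      by_cases hc : (p.1 : W) * (p.2 : W) = w
      · rw [if_pos hc, LinearMap.comp_apply, nabla_comp_apply_mono nabla hnabla p.1 p.2 l]
        refine Finset.sum_congr rfl fun i _ => Finset.sum_congr rfl fun j _ => ?_
        rw [if_pos hc]
      · rw [if_neg hc, LinearMap.zero_apply]
        symm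
        refine Finset.sum_eq_zero fun i _ => Finset.sum_eq_zero fun j _ => ?_
        rw [if_neg hc]
    rw [Finset.sum_congr rfl fun p _ => step1 p]
    rw [Finset.sum_comm]
    rw [Finset.sum_congr rfl fun i _ => Finset.sum_comm]
    have step2 : ∀ (i : Fin l.length) (j : Fin (l.length - 1)),
        ∑ p : Refl cs × Refl cs,
          (if (p.1 : W) * (p.2 : W) = w then
            ((-1 : ℂ) ^ ((i : ℕ) + (j : ℕ))) •
              (if p.1 = (D1 l i).get (Fin.cast (D1_length l i).symm j) ∧ p.2 = l.get i then
                RingQuot.mkAlgHom ℂ (CoverRel cs)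
                  (mono cs (D1 (D1 l i) (Fin.cast (D1_length l i).symm j)))
              else 0)
          else 0) =
        ((-1 : ℂ) ^ ((i : ℕ) + (j : ℕ))) •
          (if ((D1 l i).get (Fin.cast (D1_length l i).symm j) : W) * (l.get i : W) = w then
            RingQuot.mkAlgHom ℂ (CoverRel cs)
              (mono cs (D1 (D1 l i) (Fin.cast (D1_length l i).symm j)))
          else 0) := by
      intro i j
      rw [Finset.sum_eq_single_of_mem
        ((D1 l i).get (Fin.cast (D1_length l i).symm j), l.get i) (Finset.mem_univ _)]
      · simp only [and_self, if_true, eq_self_iff_true, true_and, and_true]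
        split_ifs with hw' <;> simp
      · intro b _ hb
        split_ifs with hw1 hw2
        · exact absurd (Prod.ext hw2.1 hw2.2) hb
        · rw [smul_zero]
        · rfl
    rw [Finset.sum_congr rfl fun i _ => Finset.sum_congr rfl fun j _ => step2 i j]
    exact cancel l
      (fun i j => ((D1 l i).get (Fin.cast (D1_length l i).symm j) : W) * (l.get i : W) = w)
      (fun i j h h1 h2 => cond2_iff w l i j h h1 h2)
end
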